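/- For every n ∈ ℕ, the following four L_OR theories are deductively equivalent (prove the same sentences): (1) IOpen = PA⁻ + {I_x θ : θ(x, z̄) quantifier-free L_OR formula}; (2) PA⁻ + {I^<_x θ : θ(x, z̄) quantifier-free L_OR formula}; (3) PA⁻ + {I^{(n+1)-step}_x θ : θ(x, z̄) quantifier-free L_OR formula}; (4) PA⁻ + {I^{n+1}_x θ : θ(x, z̄) quantifier-free L_OR formula}. -/

import Mathlib

open FirstOrder Language

/-! ### The language `L_OR = {0, 1, +, ×, <}` of ordered rings -/

/-- Function symbols of the language of ordered rings. -/
inductive LorFunc : ℕ → Type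
  | zero : LorFunc 0
  | one : LorFunc 0
  | add : LorFunc 2
  | mul : LorFunc 2

/-- Relation symbols of the language of ordered rings: just `<`. -/
inductive LorRel : ℕ → Type
  | lt : LorRel 2

/-- The first-order language of ordered rings. -/
def Lor : Language := ⟨LorFunc, LorRel⟩

/-- The term `0`. -/
def zeroT {α : Type} : Lor.Term α := Constants.term LorFunc.zero

/-- The term `1`. -/
def oneT {α : Type} : Lor.Term α := Constants.term LorFunc.one

/-- Addition of terms. -/
def addT {α : Type} (t u : Lor.Term α) : Lor.Term α := Functions.apply₂ LorFunc.add t u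

/-- Multiplication of terms. -/
def mulT {α : Type} (t u : Lor.Term α) : Lor.Term α := Functions.apply₂ LorFunc.mul t u

/-- The term `2`, an abbreviation for `1 + 1`. -/
def twoT {α : Type} : Lor.Term α := addT oneT oneT

/-- The numeral `k`, i.e. the closed term `(⋯((0+1)+1)+⋯+1)` with `k` ones. -/
def numT {α : Type} : ℕ → Lor.Term α
  | 0 => zeroT
  | n + 1 => addT (numT n) oneT

/-- The bounded formula `t < u`. -/
def ltBF {α : Type} {n : ℕ} (t u : Lor.Term (α ⊕ Fin n)) : Lor.BoundedFormula α n :=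
  Relations.boundedFormula₂ LorRel.lt t u

/-- The formula `t < u`. -/
def ltFml {α : Type} (t u : Lor.Term α) : Lor.Formula α :=
  Relations.formula₂ LorRel.lt t u

/-- The formula `t ≤ u`, an abbreviation for `t < u ∨ t = u`. -/
def leFml {α : Type} (t u : Lor.Term α) : Lor.Formula α :=
  ltFml t u ⊔ Term.equal t u

/-! ### The base theory `PA⁻` -/

/-- `PA⁻`, the theory of non-negative parts of discretely ordered rings. -/
def PAminus : Lor.Theory :=
  { -- (P1) associativity of +
    ∀' ∀' ∀' (addT (addT &0 &1) &2 =' addT &0 (addT &1 &2)),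
    -- (P2) commutativity of +
    ∀' ∀' (addT &0 &1 =' addT &1 &0),
    -- (P3) associativity of ×
    ∀' ∀' ∀' (mulT (mulT &0 &1) &2 =' mulT &0 (mulT &1 &2)),
    -- (P4) commutativity of ×
    ∀' ∀' (mulT &0 &1 =' mulT &1 &0),
    -- (P5) distributivity
    ∀' ∀' ∀' (mulT &0 (addT &1 &2) =' addT (mulT &0 &1) (mulT &0 &2)),
    -- (P6) x + 0 = x
    ∀' (addT &0 zeroT =' &0),
    -- (P7) x × 0 = 0
    ∀' (mulT &0 zeroT =' zeroT),
    -- (P8) x × 1 = x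
    ∀' (mulT &0 oneT =' &0),
    -- (P9) transitivity of <
    ∀' ∀' ∀' (ltBF &0 &1 ⊓ ltBF &1 &2 ⟹ ltBF &0 &2),
    -- (P10) irreflexivity of <
    ∀' ∼(ltBF &0 &0),
    -- (P11) linearity of <
    ∀' ∀' (ltBF &0 &1 ⊔ &0 =' &1 ⊔ ltBF &1 &0),
    -- (P12) x < y → x + z < y + z
    ∀' ∀' ∀' (ltBF &0 &1 ⟹ ltBF (addT &0 &2) (addT &1 &2)),
    -- (P13) z ≠ 0 ∧ x < y → x × z < y × z
    ∀' ∀' ∀' (∼(&2 =' zeroT) ⊓ ltBF &0 &1 ⟹ ltBF (mulT &0 &2) (mulT &1 &2)),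
    -- (P14) x < y ↔ ∃z ((x + z) + 1 = y)
    ∀' ∀' (ltBF &0 &1 ⇔ ∃' (addT (addT &0 &2) oneT =' &1)),
    -- (P15) 0 < 1 ∧ (x > 0 → x ≥ 1)
    ltBF zeroT oneT ⊓ ∀' (ltBF zeroT &0 ⟹ ltBF oneT &0 ⊔ oneT =' &0),
    -- (P16) x ≥ 0
    ∀' (ltBF zeroT &0 ⊔ zeroT =' &0) }

/-! ### Formulas `θ(x, z̄)` with a distinguished variable `x` and parameters `z̄`

A formula `θ(x, z̄)` with `m` parameters `z̄` and a distinguished induction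
variable `x` is represented as `θ : Lor.Formula (Fin m ⊕ Fin 1)`, where the
`Fin m` component gives the parameters and the `Fin 1` component gives `x`. -/

/-- The distinguished variable `x` as a term. -/
def xT {m : ℕ} : Lor.Term (Fin m ⊕ Fin 1) := Term.var (Sum.inr 0)

/-- `θ(t, z̄)`, where `t` is a term possibly involving `x` and the parameters. -/
def substX {m : ℕ} (θ : Lor.Formula (Fin m ⊕ Fin 1)) (t : Lor.Term (Fin m ⊕ Fin 1)) :
    Lor.Formula (Fin m ⊕ Fin 1) :=
  θ.subst (Sum.elim (fun i => Term.var (Sum.inl i)) fun _ => t)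

/-- `θ(t, z̄)` where `t` is a term in the parameters only. -/
def substP {m : ℕ} (θ : Lor.Formula (Fin m ⊕ Fin 1)) (t : Lor.Term (Fin m)) :
    Lor.Formula (Fin m) :=
  θ.subst (Sum.elim (fun i => Term.var i) fun _ => t)

/-- `Formula.iAlls` with its Mathlib (Dec 2024) signature and definition. -/
noncomputable def iAllsOld {L : Language} {α β γ : Type*} [Finite γ] (f : α → β ⊕ γ)
    (φ : L.Formula α) : L.Formula β :=
  let e := Classical.choice (Classical.choose_spec (Finite.exists_equiv_fin γ))
  (BoundedFormula.relabel (fun a => Sum.map id e (f a)) φ).alls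

/-- `∀x θ(x, z̄)`. -/
noncomputable def allX {m : ℕ} (θ : Lor.Formula (Fin m ⊕ Fin 1)) : Lor.Formula (Fin m) :=
  iAllsOld (fun p => p : Fin m ⊕ Fin 1 → Fin m ⊕ Fin 1) θ

/-- The universal closure of a formula, as a sentence. -/
noncomputable def closeAll {α : Type} [Finite α] (φ : Lor.Formula α) : Lor.Sentence :=
  iAllsOld (Sum.inr : α → Empty ⊕ α) φ

/-- `∀x' < x, θ(x', z̄)`, a formula with free variable `x` (and parameters). -/
noncomputable def allLtX {m : ℕ} (θ : Lor.Formula (Fin m ⊕ Fin 1)) :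
    Lor.Formula (Fin m ⊕ Fin 1) :=
  iAllsOld (fun p => p : (Fin m ⊕ Fin 1) ⊕ Fin 1 → (Fin m ⊕ Fin 1) ⊕ Fin 1)
    (ltFml (Term.var (Sum.inr 0)) (Term.var (Sum.inl (Sum.inr 0))) ⟹
      θ.relabel (Sum.elim (fun i => Sum.inl (Sum.inl i)) fun _ => Sum.inr 0))

/-- `∀x' ≤ x, θ(x', z̄)`, a formula with free variable `x` (and parameters). -/
noncomputable def allLeX {m : ℕ} (θ : Lor.Formula (Fin m ⊕ Fin 1)) :
    Lor.Formula (Fin m ⊕ Fin 1) :=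
  iAllsOld (fun p => p : (Fin m ⊕ Fin 1) ⊕ Fin 1 → (Fin m ⊕ Fin 1) ⊕ Fin 1)
    (leFml (Term.var (Sum.inr 0)) (Term.var (Sum.inl (Sum.inr 0))) ⟹
      θ.relabel (Sum.elim (fun i => Sum.inl (Sum.inl i)) fun _ => Sum.inr 0))

/-- The conjunction `⋀_{k<j} θ(k, z̄)`. -/
def conjNum {m : ℕ} (θ : Lor.Formula (Fin m ⊕ Fin 1)) : ℕ → Lor.Formula (Fin m)
  | 0 => ⊤
  | j + 1 => conjNum θ j ⊓ substP θ (numT j)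

/-- The conjunction `⋀_{k<j} θ(x+k, z̄)`. -/
def conjShift {m : ℕ} (θ : Lor.Formula (Fin m ⊕ Fin 1)) : ℕ → Lor.Formula (Fin m ⊕ Fin 1)
  | 0 => ⊤
  | j + 1 => conjShift θ j ⊓ substX θ (addT xT (numT j))

/-! ### Induction axioms -/

/-- The induction axiom `I_x θ`:
`∀z̄( θ(0,z̄) ∧ ∀x(θ(x,z̄) → θ(x+1,z̄)) → ∀x θ(x,z̄) )`. -/
noncomputable def indAx {m : ℕ} (θ : Lor.Formula (Fin m ⊕ Fin 1)) : Lor.Sentence :=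
  closeAll ((substP θ zeroT ⊓ allX (θ ⟹ substX θ (addT xT oneT))) ⟹ allX θ)

/-- The `<`-induction axiom `I^<_x θ`:
`∀z̄( ∀y(∀x<y θ(x,z̄) → θ(y,z̄)) → ∀x θ(x,z̄) )`. -/
noncomputable def indLtAx {m : ℕ} (θ : Lor.Formula (Fin m ⊕ Fin 1)) : Lor.Sentence :=
  closeAll (allX (allLtX θ ⟹ θ) ⟹ allX θ)

/-- The `(n+1)`-step induction axiom `I^{(n+1)-step}_x θ`:
`∀z̄( ⋀_{k<n+1} θ(k,z̄) ∧ ∀x(θ(x,z̄) → θ(x+n+1,z̄)) → ∀x θ(x,z̄) )`. -/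
noncomputable def indStepAx {m : ℕ} (n : ℕ) (θ : Lor.Formula (Fin m ⊕ Fin 1)) : Lor.Sentence :=
  closeAll ((conjNum θ (n + 1) ⊓ allX (θ ⟹ substX θ (addT xT (numT (n + 1))))) ⟹ allX θ)

/-- The `(n+1)`-induction axiom `I^{n+1}_x θ`:
`∀z̄( ⋀_{k<n+1} θ(k,z̄) ∧ ∀x(⋀_{k<n+1} θ(x+k,z̄) → θ(x+n+1,z̄)) → ∀x θ(x,z̄) )`. -/
noncomputable def indKAx {m : ℕ} (n : ℕ) (θ : Lor.Formula (Fin m ⊕ Fin 1)) : Lor.Sentence :=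
  closeAll ((conjNum θ (n + 1) ⊓ allX (conjShift θ (n + 1) ⟹ substX θ (addT xT (numT (n + 1))))) ⟹
    allX θ)

/-- The polynomial induction axiom `I^p_x θ`:
`∀z̄( θ(0,z̄) ∧ ∀x(θ(x,z̄) → θ(2x,z̄) ∧ θ(2x+1,z̄)) → ∀x θ(x,z̄) )`, where `2x` is `(1+1)×x`. -/
noncomputable def indPAx {m : ℕ} (θ : Lor.Formula (Fin m ⊕ Fin 1)) : Lor.Sentence :=
  closeAll ((substP θ zeroT ⊓
      allX (θ ⟹ substX θ (mulT twoT xT) ⊓ substX θ (addT (mulT twoT xT) oneT))) ⟹ allX θ)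

/-! ### Theories -/

/-- Peano arithmetic: `PA⁻` plus induction for all `L_OR` formulas. -/
noncomputable def PA : Lor.Theory :=
  PAminus ∪ {σ | ∃ (m : ℕ) (θ : Lor.Formula (Fin m ⊕ Fin 1)), σ = indAx θ}

/-- `IOpen`: `PA⁻` plus induction for all quantifier-free `L_OR` formulas. -/
noncomputable def IOpen : Lor.Theory :=
  PAminus ∪ {σ | ∃ (m : ℕ) (θ : Lor.Formula (Fin m ⊕ Fin 1)), θ.IsQF ∧ σ = indAx θ}

/-! ### Notions of inductiveness

A formula `φ(x)` with exactly one free variable `x` is represented as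
`φ : Lor.Formula (Fin 0 ⊕ Fin 1)` (no parameters). -/

/-- Formulas `φ(x)` with exactly one free variable `x`. -/
abbrev OneVarFormula : Type := Lor.Formula (Fin 0 ⊕ Fin 1)

/-- The sentence `∀x φ(x)`. -/
noncomputable def allS (φ : OneVarFormula) : Lor.Sentence := closeAll (allX φ)

/-- `φ(x)` is inductive: `PA⁻ ⊢ φ(0)` and `PA⁻ ⊢ ∀x(φ(x) → φ(x+1))`. -/
noncomputable def IsInductive (φ : OneVarFormula) : Prop :=
  PAminus ⊨ᵇ closeAll (substP φ zeroT) ∧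
    PAminus ⊨ᵇ closeAll (allX (φ ⟹ substX φ (addT xT oneT)))

/-- `φ(x)` is `<`-inductive: `PA⁻ ⊢ ∀y(∀x<y φ(x) → φ(y))`. -/
noncomputable def IsLtInductive (φ : OneVarFormula) : Prop :=
  PAminus ⊨ᵇ closeAll (allX (allLtX φ ⟹ φ))

/-- `φ(x)` is `(n+1)`-step inductive:
`PA⁻ ⊢ ⋀_{k<n+1} φ(k) ∧ ∀x(φ(x) → φ(x+n+1))`. -/
noncomputable def IsStepInductive (n : ℕ) (φ : OneVarFormula) : Prop :=
  PAminus ⊨ᵇ closeAll (conjNum φ (n + 1) ⊓ allX (φ ⟹ substX φ (addT xT (numT (n + 1)))))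

/-- `φ(x)` is `(n+1)`-inductive:
`PA⁻ ⊢ ⋀_{k<n+1} φ(k) ∧ ∀x(⋀_{k<n+1} φ(x+k) → φ(x+n+1))`. -/
noncomputable def IsKInductive (n : ℕ) (φ : OneVarFormula) : Prop :=
  PAminus ⊨ᵇ
    closeAll (conjNum φ (n + 1) ⊓ allX (conjShift φ (n + 1) ⟹ substX φ (addT xT (numT (n + 1)))))

/-- `φ(x)` is p-inductive (polynomially inductive):
`PA⁻ ⊢ φ(0) ∧ ∀x(φ(x) → φ(2x) ∧ φ(2x+1))`. -/
noncomputable def IsPInductive (φ : OneVarFormula) : Prop :=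
  PAminus ⊨ᵇ closeAll (substP φ zeroT ⊓
    allX (φ ⟹ substX φ (mulT twoT xT) ⊓ substX φ (addT (mulT twoT xT) oneT)))

/-! ### Cuts -/

/-- `φ(x)` is a cut: an inductive formula with `PA⁻ ⊢ ∀x∀y(x<y ∧ φ(y) → φ(x))`. -/
noncomputable def IsCut (φ : OneVarFormula) : Prop :=
  IsInductive φ ∧
    PAminus ⊨ᵇ closeAll
      (ltFml (Term.var (Sum.inr 0) : Lor.Term (Fin 0 ⊕ Fin 2)) (Term.var (Sum.inr 1)) ⊓
          φ.relabel (Sum.elim (fun i => Sum.inl i) fun _ => Sum.inr 1) ⟹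
        φ.relabel (Sum.elim (fun i => Sum.inl i) fun _ => Sum.inr 0))

/-- `φ(x)` is an a-cut: a cut with `PA⁻ ⊢ ∀x(φ(x) → φ(x+x))`. -/
noncomputable def IsACut (φ : OneVarFormula) : Prop :=
  IsCut φ ∧ PAminus ⊨ᵇ closeAll (allX (φ ⟹ substX φ (addT xT xT)))

/-- `φ(x)` is an am-cut: an a-cut with `PA⁻ ⊢ ∀x(φ(x) → φ(x×x))`. -/
noncomputable def IsAMCut (φ : OneVarFormula) : Prop :=
  IsACut φ ∧ PAminus ⊨ᵇ closeAll (allX (φ ⟹ substX φ (mulT xT xT)))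

/-- `PA⁻` plus `<`-induction for quantifier-free `L_OR` formulas. -/
noncomputable def IOpenLt : Lor.Theory :=
  PAminus ∪ {σ | ∃ (m : ℕ) (θ : Lor.Formula (Fin m ⊕ Fin 1)), θ.IsQF ∧ σ = indLtAx θ}

/-- `PA⁻` plus `(n+1)`-step induction for quantifier-free `L_OR` formulas. -/
noncomputable def IOpenStep (n : ℕ) : Lor.Theory :=
  PAminus ∪ {σ | ∃ (m : ℕ) (θ : Lor.Formula (Fin m ⊕ Fin 1)), θ.IsQF ∧ σ = indStepAx n θ}

/-- `PA⁻` plus `(n+1)`-induction for quantifier-free `L_OR` formulas. -/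
noncomputable def IOpenK (n : ℕ) : Lor.Theory :=
  PAminus ∪ {σ | ∃ (m : ℕ) (θ : Lor.Formula (Fin m ⊕ Fin 1)), θ.IsQF ∧ σ = indKAx n θ}


set_option linter.unusedSectionVars false
section ModelSetup
variable {M : Type} [Nonempty M] [Lor.Structure M]

instance : Zero M := ⟨Structure.funMap (L := Lor) LorFunc.zero ![]⟩
instance : One M := ⟨Structure.funMap (L := Lor) LorFunc.one ![]⟩
instance : Add M := ⟨fun a b => Structure.funMap (L := Lor) LorFunc.add ![a, b]⟩
instance : Mul M := ⟨fun a b => Structure.funMap (L := Lor) LorFunc.mul ![a, b]⟩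
instance : LT M := ⟨fun a b => Structure.RelMap (L := Lor) LorRel.lt ![a, b]⟩

@[simp] lemma realize_zeroT {α : Type} (v : α → M) : (zeroT).realize v = (0 : M) := by
  simp only [zeroT, Term.realize_constants]
  exact congrArg (Structure.funMap (L := Lor) _) (Subsingleton.elim _ _)

@[simp] lemma realize_oneT {α : Type} (v : α → M) : (oneT).realize v = (1 : M) := by
  simp only [oneT, Term.realize_constants]
  exact congrArg (Structure.funMap (L := Lor) _) (Subsingleton.elim _ _)

@[simp] lemma realize_addT {α : Type} (v : α → M) (t u : Lor.Term α) :
    (addT t u).realize v = t.realize v + u.realize v := by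
  simp only [addT, Term.realize_functions_apply₂]; exact Term.realize_functions_apply₂

@[simp] lemma realize_mulT {α : Type} (v : α → M) (t u : Lor.Term α) :
    (mulT t u).realize v = t.realize v * u.realize v := by
  simp only [mulT, Term.realize_functions_apply₂]; exact Term.realize_functions_apply₂

@[simp] lemma realize_ltBF {α : Type} {n : ℕ} (v : α → M) (xs : Fin n → M)
    (t u : Lor.Term (α ⊕ Fin n)) :
    (ltBF t u).Realize v xs ↔ t.realize (Sum.elim v xs) < u.realize (Sum.elim v xs) := by
  simp only [ltBF, BoundedFormula.realize_rel₂]; exact BoundedFormula.realize_rel₂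

@[simp] lemma realize_ltFml {α : Type} (v : α → M) (t u : Lor.Term α) :
    (ltFml t u).Realize v ↔ t.realize v < u.realize v := by
  simp only [ltFml, Formula.realize_rel₂]; exact Formula.realize_rel₂

variable [PAminus.Model M]

private lemma pa_realize {σ : Lor.Sentence} (h : σ ∈ PAminus) : M ⊨ σ :=
  PAminus.realize_sentence_of_mem (M := M) h

open Set in
lemma M_add_assoc (a b c : M) : a + b + c = a + (b + c) := by
  have h := pa_realize (M := M) (show _ ∈ PAminus from mem_insert _ _)
  simp [Sentence.Realize, Formula.Realize, Fin.snoc] at h; exact h a b c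

open Set in
lemma M_add_comm (a b : M) : a + b = b + a := by
  have h := pa_realize (M := M) (show _ ∈ PAminus from
    mem_insert_of_mem _ (mem_insert _ _))
  simp [Sentence.Realize, Formula.Realize, Fin.snoc] at h; exact h a b

open Set in
lemma M_mul_assoc (a b c : M) : a * b * c = a * (b * c) := by
  have h := pa_realize (M := M) (show _ ∈ PAminus from
    mem_insert_of_mem _ (mem_insert_of_mem _ (mem_insert _ _)))
  simp [Sentence.Realize, Formula.Realize, Fin.snoc] at h; exact h a b c

open Set in
lemma M_mul_comm (a b : M) : a * b = b * a := by
  have h := pa_realize (M := M) (show _ ∈ PAminus from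
    mem_insert_of_mem _ (mem_insert_of_mem _ (mem_insert_of_mem _ (mem_insert _ _))))
  simp [Sentence.Realize, Formula.Realize, Fin.snoc] at h; exact h a b

open Set in
lemma M_left_distrib (a b c : M) : a * (b + c) = a * b + a * c := by
  have h := pa_realize (M := M) (show _ ∈ PAminus from
    mem_insert_of_mem _ (mem_insert_of_mem _ (mem_insert_of_mem _ (mem_insert_of_mem _
      (mem_insert _ _)))))
  simp [Sentence.Realize, Formula.Realize, Fin.snoc] at h; exact h a b c

open Set in
lemma M_add_zero (a : M) : a + 0 = a := by
  have h := pa_realize (M := M) (show _ ∈ PAminus from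
    mem_insert_of_mem _ (mem_insert_of_mem _ (mem_insert_of_mem _ (mem_insert_of_mem _
      (mem_insert_of_mem _ (mem_insert _ _))))))
  simp [Sentence.Realize, Formula.Realize, Fin.snoc] at h; exact h a

open Set in
lemma M_mul_zero (a : M) : a * 0 = 0 := by
  have h := pa_realize (M := M) (show _ ∈ PAminus from
    mem_insert_of_mem _ (mem_insert_of_mem _ (mem_insert_of_mem _ (mem_insert_of_mem _
      (mem_insert_of_mem _ (mem_insert_of_mem _ (mem_insert _ _)))))))
  simp [Sentence.Realize, Formula.Realize, Fin.snoc] at h; exact h a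

open Set in
lemma M_mul_one (a : M) : a * 1 = a := by
  have h := pa_realize (M := M) (show _ ∈ PAminus from
    mem_insert_of_mem _ (mem_insert_of_mem _ (mem_insert_of_mem _ (mem_insert_of_mem _
      (mem_insert_of_mem _ (mem_insert_of_mem _ (mem_insert_of_mem _ (mem_insert _ _))))))))
  simp [Sentence.Realize, Formula.Realize, Fin.snoc] at h; exact h a

open Set in
lemma M_lt_trans {a b c : M} (h1 : a < b) (h2 : b < c) : a < c := by
  have h := pa_realize (M := M) (show _ ∈ PAminus from
    mem_insert_of_mem _ (mem_insert_of_mem _ (mem_insert_of_mem _ (mem_insert_of_mem _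
      (mem_insert_of_mem _ (mem_insert_of_mem _ (mem_insert_of_mem _ (mem_insert_of_mem _
        (mem_insert _ _)))))))))
  simp [Sentence.Realize, Formula.Realize, Fin.snoc] at h; exact h a b c h1 h2

open Set in
lemma M_lt_irrefl (a : M) : ¬ a < a := by
  have h := pa_realize (M := M) (show _ ∈ PAminus from
    mem_insert_of_mem _ (mem_insert_of_mem _ (mem_insert_of_mem _ (mem_insert_of_mem _
      (mem_insert_of_mem _ (mem_insert_of_mem _ (mem_insert_of_mem _ (mem_insert_of_mem _
        (mem_insert_of_mem _ (mem_insert _ _))))))))))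
  simp [Sentence.Realize, Formula.Realize, Fin.snoc] at h; exact h a

open Set in
lemma M_lt_total (a b : M) : a < b ∨ a = b ∨ b < a := by
  have h := pa_realize (M := M) (show _ ∈ PAminus from
    mem_insert_of_mem _ (mem_insert_of_mem _ (mem_insert_of_mem _ (mem_insert_of_mem _
      (mem_insert_of_mem _ (mem_insert_of_mem _ (mem_insert_of_mem _ (mem_insert_of_mem _
        (mem_insert_of_mem _ (mem_insert_of_mem _ (mem_insert _ _)))))))))))
  simp [Sentence.Realize, Formula.Realize, Fin.snoc] at h
  rcases h a b with (h' | h') | h'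
  · exact Or.inl h'
  · exact Or.inr (Or.inl h')
  · exact Or.inr (Or.inr h')

open Set in
lemma M_add_lt_add_right {a b : M} (h1 : a < b) (c : M) : a + c < b + c := by
  have h := pa_realize (M := M) (show _ ∈ PAminus from
    mem_insert_of_mem _ (mem_insert_of_mem _ (mem_insert_of_mem _ (mem_insert_of_mem _
      (mem_insert_of_mem _ (mem_insert_of_mem _ (mem_insert_of_mem _ (mem_insert_of_mem _
        (mem_insert_of_mem _ (mem_insert_of_mem _ (mem_insert_of_mem _
          (mem_insert _ _))))))))))))
  simp [Sentence.Realize, Formula.Realize, Fin.snoc] at h; exact h a b c h1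

open Set in
lemma M_mul_lt_mul_right {a b c : M} (hc : c ≠ 0) (h1 : a < b) : a * c < b * c := by
  have h := pa_realize (M := M) (show _ ∈ PAminus from
    mem_insert_of_mem _ (mem_insert_of_mem _ (mem_insert_of_mem _ (mem_insert_of_mem _
      (mem_insert_of_mem _ (mem_insert_of_mem _ (mem_insert_of_mem _ (mem_insert_of_mem _
        (mem_insert_of_mem _ (mem_insert_of_mem _ (mem_insert_of_mem _ (mem_insert_of_mem _
          (mem_insert _ _)))))))))))))
  simp [Sentence.Realize, Formula.Realize, Fin.snoc] at h; exact h a b c hc h1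

open Set in
lemma M_lt_iff_exists (a b : M) : a < b ↔ ∃ c : M, a + c + 1 = b := by
  have h := pa_realize (M := M) (show _ ∈ PAminus from
    mem_insert_of_mem _ (mem_insert_of_mem _ (mem_insert_of_mem _ (mem_insert_of_mem _
      (mem_insert_of_mem _ (mem_insert_of_mem _ (mem_insert_of_mem _ (mem_insert_of_mem _
        (mem_insert_of_mem _ (mem_insert_of_mem _ (mem_insert_of_mem _ (mem_insert_of_mem _
          (mem_insert_of_mem _ (mem_insert _ _))))))))))))))
  simp [Sentence.Realize, Formula.Realize, Fin.snoc] at h; exact h a b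

open Set in
lemma M_zero_lt_one_and_discrete :
    ((0 : M) < 1) ∧ ∀ a : M, 0 < a → 1 < a ∨ 1 = a := by
  have h := pa_realize (M := M) (show _ ∈ PAminus from
    mem_insert_of_mem _ (mem_insert_of_mem _ (mem_insert_of_mem _ (mem_insert_of_mem _
      (mem_insert_of_mem _ (mem_insert_of_mem _ (mem_insert_of_mem _ (mem_insert_of_mem _
        (mem_insert_of_mem _ (mem_insert_of_mem _ (mem_insert_of_mem _ (mem_insert_of_mem _
          (mem_insert_of_mem _ (mem_insert_of_mem _ (mem_insert _ _)))))))))))))))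
  simp [Sentence.Realize, Formula.Realize, Fin.snoc] at h
  exact ⟨h.1, h.2⟩

open Set in
lemma M_zero_le' (a : M) : 0 < a ∨ 0 = a := by
  have h := pa_realize (M := M) (show _ ∈ PAminus from
    mem_insert_of_mem _ (mem_insert_of_mem _ (mem_insert_of_mem _ (mem_insert_of_mem _
      (mem_insert_of_mem _ (mem_insert_of_mem _ (mem_insert_of_mem _ (mem_insert_of_mem _
        (mem_insert_of_mem _ (mem_insert_of_mem _ (mem_insert_of_mem _ (mem_insert_of_mem _
          (mem_insert_of_mem _ (mem_insert_of_mem _ (mem_insert_of_mem _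
            (mem_singleton_iff.mpr rfl))))))))))))))))
  simp [Sentence.Realize, Formula.Realize, Fin.snoc] at h; exact h a

/-! ### Order and algebra structure on `M` -/

instance : LE M := ⟨fun a b => a < b ∨ a = b⟩

lemma M_le_def {a b : M} : a ≤ b ↔ a < b ∨ a = b := Iff.rfl

lemma M_lt_asymm {a b : M} (h : a < b) : ¬ b < a := fun h' => M_lt_irrefl a (M_lt_trans h h')

noncomputable instance : LinearOrder M where
  le_refl a := Or.inr rfl
  le_trans a b c hab hbc := by
    rcases hab with h | rfl
    · rcases hbc with h' | rfl
      · exact Or.inl (M_lt_trans h h')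
      · exact Or.inl h
    · exact hbc
  le_antisymm a b hab hba := by
    rcases hab with h | rfl
    · rcases hba with h' | rfl
      · exact absurd h (M_lt_asymm h')
      · rfl
    · rfl
  le_total a b := by
    rcases M_lt_total a b with h | h | h
    · exact Or.inl (Or.inl h)
    · exact Or.inl (Or.inr h)
    · exact Or.inr (Or.inl h)
  lt_iff_le_not_ge a b := by
    constructor
    · intro h
      refine ⟨Or.inl h, fun hba => ?_⟩
      rcases hba with h' | rfl
      · exact M_lt_asymm h h'
      · exact M_lt_irrefl _ h
    · rintro ⟨hab | rfl, hn⟩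
      · exact hab
      · exact absurd (Or.inr rfl) hn
  toDecidableLE := fun a b => Classical.dec _

instance : AddCommMonoid M where
  add_assoc := M_add_assoc
  zero_add a := by rw [M_add_comm]; exact M_add_zero a
  add_zero := M_add_zero
  add_comm := M_add_comm
  nsmul := nsmulRec

instance : CommMonoid M where
  mul_assoc := M_mul_assoc
  one_mul a := by rw [M_mul_comm]; exact M_mul_one a
  mul_one := M_mul_one
  mul_comm := M_mul_comm
  npow := npowRec

instance : CommSemiring M where
  left_distrib := M_left_distrib
  right_distrib a b c := by
    rw [M_mul_comm (a + b) c, M_left_distrib, M_mul_comm c a, M_mul_comm c b]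
  zero_mul a := by rw [M_mul_comm]; exact M_mul_zero a
  mul_zero := M_mul_zero
  mul_assoc := M_mul_assoc
  mul_comm := M_mul_comm
  one_mul := fun a => by rw [M_mul_comm]; exact M_mul_one a
  mul_one := M_mul_one

lemma M_zero_le (a : M) : 0 ≤ a := by
  rcases M_zero_le' (M := M) a with h | h
  · exact Or.inl h
  · exact Or.inr h

lemma M_zero_lt_one : (0 : M) < 1 := M_zero_lt_one_and_discrete.1

lemma M_one_le_of_pos {a : M} (h : 0 < a) : 1 ≤ a := by
  rcases M_zero_lt_one_and_discrete.2 a h with h' | h'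
  · exact le_of_lt h'
  · exact le_of_eq h'

lemma M_add_lt_add_left {a b : M} (h : a < b) (c : M) : c + a < c + b := by
  rw [M_add_comm c a, M_add_comm c b]; exact M_add_lt_add_right h c

lemma M_add_le_add_right {a b : M} (h : a ≤ b) (c : M) : a + c ≤ b + c := by
  rcases h with h | rfl
  · exact le_of_lt (M_add_lt_add_right h c)
  · exact le_rfl

lemma M_add_le_add_left {a b : M} (h : a ≤ b) (c : M) : c + a ≤ c + b := by
  rw [M_add_comm c a, M_add_comm c b]; exact M_add_le_add_right h c

lemma M_lt_of_add_lt_add_right {a b c : M} (h : a + c < b + c) : a < b := by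
  rcases M_lt_total a b with h' | rfl | h'
  · exact h'
  · exact absurd h (M_lt_irrefl _)
  · exact absurd h (M_lt_asymm (M_add_lt_add_right h' c))

lemma M_add_right_cancel {a b c : M} (h : a + c = b + c) : a = b := by
  rcases M_lt_total a b with h' | rfl | h'
  · exact absurd h (ne_of_lt (M_add_lt_add_right h' c))
  · rfl
  · exact absurd h.symm (ne_of_lt (M_add_lt_add_right h' c))

lemma M_add_left_cancel {a b c : M} (h : c + a = c + b) : a = b := by
  rw [M_add_comm c a, M_add_comm c b] at h; exact M_add_right_cancel h

lemma M_add_lt_add_of_le_of_lt {a b c d : M} (h1 : a ≤ b) (h2 : c < d) : a + c < b + d := by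
  calc a + c ≤ b + c := M_add_le_add_right h1 c
  _ < b + d := M_add_lt_add_left h2 b

lemma M_add_lt_add_of_lt_of_le {a b c d : M} (h1 : a < b) (h2 : c ≤ d) : a + c < b + d := by
  calc a + c < b + c := M_add_lt_add_right h1 c
  _ ≤ b + d := M_add_le_add_left h2 b

lemma M_add_le_add {a b c d : M} (h1 : a ≤ b) (h2 : c ≤ d) : a + c ≤ b + d := by
  calc a + c ≤ b + c := M_add_le_add_right h1 c
  _ ≤ b + d := M_add_le_add_left h2 b

lemma M_le_add_right (a c : M) : a ≤ a + c := by
  have := M_add_le_add_left (M_zero_le c) a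
  rwa [M_add_zero] at this

lemma M_lt_add_one (a : M) : a < a + 1 := by
  have := M_add_lt_add_left M_zero_lt_one a
  rwa [M_add_zero] at this

lemma M_exists_add_one_of_lt {a b : M} (h : a < b) : ∃ c : M, a + c + 1 = b :=
  (M_lt_iff_exists a b).mp h

lemma M_exists_add_of_le {a b : M} (h : a ≤ b) : ∃ c : M, a + c = b := by
  rcases h with h | rfl
  · obtain ⟨c, hc⟩ := M_exists_add_one_of_lt h
    exact ⟨c + 1, by rw [← M_add_assoc]; exact hc⟩
  · exact ⟨0, M_add_zero a⟩

lemma M_add_one_le_of_lt {a b : M} (h : a < b) : a + 1 ≤ b := by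
  obtain ⟨c, hc⟩ := M_exists_add_one_of_lt h
  calc a + 1 ≤ a + c + 1 := M_add_le_add_right (M_le_add_right a c) 1
  _ = b := hc

lemma M_lt_add_one_iff_le {a b : M} : a < b + 1 ↔ a ≤ b := by
  constructor
  · intro h
    rcases M_lt_total a b with h' | rfl | h'
    · exact le_of_lt h'
    · exact le_rfl
    · exact absurd h (not_lt_of_ge (M_add_one_le_of_lt h'))
  · intro h
    exact lt_of_le_of_lt h (M_lt_add_one b)

lemma M_pos_of_ne_zero {a : M} (h : a ≠ 0) : 0 < a := by
  rcases M_zero_le' (M := M) a with h' | h'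
  · exact h'
  · exact absurd h'.symm h

lemma M_mul_lt_mul_right' {a b c : M} (hc : 0 < c) (h : a < b) : a * c < b * c :=
  M_mul_lt_mul_right (ne_of_gt hc) h

lemma M_mul_le_mul_right' {a b : M} (h : a ≤ b) (c : M) : a * c ≤ b * c := by
  rcases h with h | rfl
  · rcases M_zero_le' (M := M) c with hc | hc
    · exact le_of_lt (M_mul_lt_mul_right' hc h)
    · rw [← hc, M_mul_zero, M_mul_zero]
  · exact le_rfl

/-! ### Realization lemmas for the definitions -/

/-- Valuation sending parameters to `z` and the distinguished variable to `x`. -/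
def mval {m : ℕ} (z : Fin m → M) (x : M) : Fin m ⊕ Fin 1 → M :=
  Sum.elim z fun _ => x

lemma forall_fin_one {P : (Fin 1 → M) → Prop} :
    (∀ i : Fin 1 → M, P i) ↔ ∀ x : M, P fun _ => x := by
  constructor
  · intro h x; exact h _
  · intro h i
    have : (fun _ : Fin 1 => i 0) = i := by
      funext j; rw [Subsingleton.elim j 0]
    rw [← this]; exact h (i 0)

theorem Formula_realize_iAllsOld {L : Language} {M : Type*} [L.Structure M] {α β γ : Type*}
    [Finite γ] {f : α → β ⊕ γ} {φ : L.Formula α} {v : β → M} : (iAllsOld f φ).Realize v ↔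
      ∀ (i : γ → M), φ.Realize (fun a => Sum.elim v i (f a)) := by
  let e := Classical.choice (Classical.choose_spec (Finite.exists_equiv_fin γ))
  rw [iAllsOld]
  simp only [Nat.add_zero, BoundedFormula.realize_alls, BoundedFormula.realize_relabel,
    Function.comp_def, Fin.castAdd_zero, Sum.elim_map, id_eq]
  refine Equiv.forall_congr ?_ ?_
  · exact ⟨fun v => v ∘ e, fun v => v ∘ e.symm,
      fun _ => by simp [Function.comp_def],
      fun _ => by simp [Function.comp_def]⟩
  · intro x
    rw [Formula.Realize, iff_iff_eq]
    congr
    funext i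
    exact i.elim0

theorem BoundedFormula_realize_iAllsOld {L : Language} {M : Type*} [L.Structure M]
    {α β γ : Type*} [Finite γ] {f : α → β ⊕ γ} {φ : L.Formula α} {v : β → M}
    {v' : Fin 0 → M} : BoundedFormula.Realize (iAllsOld f φ) v v' ↔
      ∀ (i : γ → M), φ.Realize (fun a => Sum.elim v i (f a)) := by
  rw [← Formula_realize_iAllsOld, iff_iff_eq]; congr; simp [eq_iff_true_of_subsingleton]

lemma realize_closeAll {α : Type} [Finite α] (φ : Lor.Formula α) :
    (M ⊨ closeAll φ) ↔ ∀ v : α → M, φ.Realize v := by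
  unfold closeAll
  rw [Sentence.Realize, Formula.Realize, BoundedFormula_realize_iAllsOld]
  constructor
  · intro h v; exact h v
  · intro h v; exact h v

lemma realize_allX {m : ℕ} (θ : Lor.Formula (Fin m ⊕ Fin 1)) (z : Fin m → M) :
    (allX θ).Realize z ↔ ∀ x : M, θ.Realize (mval z x) := by
  unfold allX
  rw [Formula_realize_iAllsOld, forall_fin_one]
  exact Iff.rfl

lemma realize_substX {m : ℕ} (θ : Lor.Formula (Fin m ⊕ Fin 1))
    (t : Lor.Term (Fin m ⊕ Fin 1)) (v : Fin m ⊕ Fin 1 → M) :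
    (substX θ t).Realize v ↔ θ.Realize (Sum.elim (fun i => v (Sum.inl i)) fun _ => t.realize v) := by
  unfold substX
  refine Iff.trans BoundedFormula.realize_subst ?_
  exact iff_of_eq (congrArg (fun v => Formula.Realize θ v) (funext fun a => by cases a <;> rfl))

lemma realize_substX' {m : ℕ} (θ : Lor.Formula (Fin m ⊕ Fin 1))
    (t : Lor.Term (Fin m ⊕ Fin 1)) (z : Fin m → M) (x : M) :
    (substX θ t).Realize (mval z x) ↔ θ.Realize (mval z (t.realize (mval z x))) := by
  rw [realize_substX]
  exact iff_of_eq (congrArg (fun v => Formula.Realize θ v) (funext fun a => by cases a <;> rfl))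

lemma realize_substP {m : ℕ} (θ : Lor.Formula (Fin m ⊕ Fin 1))
    (t : Lor.Term (Fin m)) (z : Fin m → M) :
    (substP θ t).Realize z ↔ θ.Realize (mval z (t.realize z)) := by
  unfold substP
  refine Iff.trans BoundedFormula.realize_subst ?_
  exact iff_of_eq (congrArg (fun v => Formula.Realize θ v) (funext fun a => by cases a <;> rfl))

@[simp] lemma realize_xT {m : ℕ} (z : Fin m → M) (x : M) :
    (xT.realize (mval z x)) = x := rfl

@[simp] lemma realize_numT {α : Type} (v : α → M) (k : ℕ) :
    ((numT k).realize v) = (k : M) := by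
  induction k with
  | zero => simp [numT]
  | succ k ih => simp [numT, ih]

lemma realize_allLtX {m : ℕ} (θ : Lor.Formula (Fin m ⊕ Fin 1)) (z : Fin m → M) (x : M) :
    (allLtX θ).Realize (mval z x) ↔ ∀ y : M, y < x → θ.Realize (mval z y) := by
  unfold allLtX
  rw [Formula_realize_iAllsOld, forall_fin_one]
  have key : ∀ y : M,
      (Formula.Realize
        (ltFml (var (Sum.inr 0)) (var (Sum.inl (Sum.inr 0))) ⟹
          Formula.relabel (Sum.elim (fun i => Sum.inl (Sum.inl i)) fun _ => Sum.inr 0) θ)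
        fun a => Sum.elim (mval z x) (fun _ : Fin 1 => y) a) ↔
      (y < x → θ.Realize (mval z y)) := by
    intro y
    rw [show (fun a => Sum.elim (mval z x) (fun _ : Fin 1 => y) a) =
      Sum.elim (mval z x) (fun _ : Fin 1 => y) from rfl]
    rw [Formula.realize_imp, realize_ltFml, Formula.realize_relabel]
    apply imp_congr
    · exact Iff.rfl
    · exact iff_of_eq (congrArg (fun v => Formula.Realize θ v) (funext fun a => by cases a <;> rfl))
  constructor
  · intro h y hy
    exact (key y).mp (h y) hy
  · intro h y
    exact (key y).mpr (h y)

lemma realize_conjNum {m : ℕ} (θ : Lor.Formula (Fin m ⊕ Fin 1)) (j : ℕ) (z : Fin m → M) :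
    (conjNum θ j).Realize z ↔ ∀ k < j, θ.Realize (mval z (k : M)) := by
  induction j with
  | zero => simp [conjNum]
  | succ j ih =>
    unfold conjNum
    rw [Formula.realize_inf, ih, realize_substP]
    constructor
    · rintro ⟨h1, h2⟩ k hk
      rcases Nat.lt_succ_iff_lt_or_eq.mp hk with h | rfl
      · exact h1 k h
      · simpa using h2
    · intro h
      refine ⟨fun k hk => h k (Nat.lt_succ_of_lt hk), ?_⟩
      simpa using h j (Nat.lt_succ_self j)

lemma realize_conjShift {m : ℕ} (θ : Lor.Formula (Fin m ⊕ Fin 1)) (j : ℕ) (z : Fin m → M)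
    (x : M) : (conjShift θ j).Realize (mval z x) ↔ ∀ k < j, θ.Realize (mval z (x + (k : M))) := by
  induction j with
  | zero => simp [conjShift]
  | succ j ih =>
    unfold conjShift
    rw [Formula.realize_inf, ih, realize_substX']
    constructor
    · rintro ⟨h1, h2⟩ k hk
      rcases Nat.lt_succ_iff_lt_or_eq.mp hk with h | rfl
      · exact h1 k h
      · simpa using h2
    · intro h
      refine ⟨fun k hk => h k (Nat.lt_succ_of_lt hk), ?_⟩
      simpa using h j (Nat.lt_succ_self j)

lemma realize_leFml {α : Type} (v : α → M) (t u : Lor.Term α) :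
    (leFml t u).Realize v ↔ t.realize v ≤ u.realize v := by
  unfold leFml
  rw [Formula.realize_sup, realize_ltFml, Formula.realize_equal, M_le_def]

/-! ### Characterizations of the induction axioms -/

/-- `Rz θ z x` means `θ(x, z̄)` holds in `M`. -/
def Rz {m : ℕ} (θ : Lor.Formula (Fin m ⊕ Fin 1)) (z : Fin m → M) (x : M) : Prop :=
  θ.Realize (mval z x)

lemma realize_indAx {m : ℕ} (θ : Lor.Formula (Fin m ⊕ Fin 1)) :
    (M ⊨ indAx θ) ↔ ∀ z : Fin m → M,
      (Rz θ z 0 ∧ ∀ x : M, Rz θ z x → Rz θ z (x + 1)) → ∀ x : M, Rz θ z x := by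
  unfold indAx
  rw [realize_closeAll]
  apply forall_congr'; intro z
  rw [Formula.realize_imp, Formula.realize_inf, realize_substP, realize_allX, realize_allX]
  apply imp_congr
  · apply and_congr
    · simp only [Rz, realize_addT, realize_xT, realize_oneT, realize_zeroT, realize_numT,
        Nat.cast_add, Nat.cast_one, Nat.cast_zero]
    · apply forall_congr'; intro x
      rw [Formula.realize_imp, realize_substX']
      simp only [Rz, realize_addT, realize_xT, realize_oneT, realize_zeroT, realize_numT,
        Nat.cast_add, Nat.cast_one, Nat.cast_zero]
  · exact Iff.rfl

lemma realize_indLtAx {m : ℕ} (θ : Lor.Formula (Fin m ⊕ Fin 1)) :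
    (M ⊨ indLtAx θ) ↔ ∀ z : Fin m → M,
      (∀ y : M, (∀ x : M, x < y → Rz θ z x) → Rz θ z y) → ∀ x : M, Rz θ z x := by
  unfold indLtAx
  rw [realize_closeAll]
  apply forall_congr'; intro z
  rw [Formula.realize_imp, realize_allX, realize_allX]
  apply imp_congr
  · apply forall_congr'; intro y
    rw [Formula.realize_imp, realize_allLtX]
    exact Iff.rfl
  · exact Iff.rfl

lemma realize_indStepAx {m : ℕ} (n : ℕ) (θ : Lor.Formula (Fin m ⊕ Fin 1)) :
    (M ⊨ indStepAx n θ) ↔ ∀ z : Fin m → M,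
      ((∀ k < n + 1, Rz θ z (k : M)) ∧ ∀ x : M, Rz θ z x → Rz θ z (x + ((n:M) + 1))) →
        ∀ x : M, Rz θ z x := by
  unfold indStepAx
  rw [realize_closeAll]
  apply forall_congr'; intro z
  rw [Formula.realize_imp, Formula.realize_inf, realize_conjNum, realize_allX, realize_allX]
  apply imp_congr
  · apply and_congr
    · exact Iff.rfl
    · apply forall_congr'; intro x
      rw [Formula.realize_imp, realize_substX']
      simp only [Rz, realize_addT, realize_xT, realize_oneT, realize_zeroT, realize_numT,
        Nat.cast_add, Nat.cast_one, Nat.cast_zero]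
  · exact Iff.rfl

lemma realize_indKAx {m : ℕ} (n : ℕ) (θ : Lor.Formula (Fin m ⊕ Fin 1)) :
    (M ⊨ indKAx n θ) ↔ ∀ z : Fin m → M,
      ((∀ k < n + 1, Rz θ z (k : M)) ∧
        ∀ x : M, (∀ k < n + 1, Rz θ z (x + (k : M))) → Rz θ z (x + ((n:M) + 1))) →
        ∀ x : M, Rz θ z x := by
  unfold indKAx
  rw [realize_closeAll]
  apply forall_congr'; intro z
  rw [Formula.realize_imp, Formula.realize_inf, realize_conjNum, realize_allX, realize_allX]
  apply imp_congr
  · apply and_congr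
    · exact Iff.rfl
    · apply forall_congr'; intro x
      rw [Formula.realize_imp, realize_substX', realize_conjShift]
      simp only [Rz, realize_addT, realize_xT, realize_oneT, realize_zeroT, realize_numT,
        Nat.cast_add, Nat.cast_one, Nat.cast_zero]
  · exact Iff.rfl

/-! ### Quantifier-freeness is preserved by substitution -/

lemma isQF_subst {α β : Type} {n : ℕ} {φ : Lor.BoundedFormula α n} (h : φ.IsQF)
    (f : α → Lor.Term β) : (φ.subst f).IsQF := by
  induction h with
  | falsum => exact BoundedFormula.isQF_bot
  | of_isAtomic h =>
    cases h with
    | equal t₁ t₂ => exact (BoundedFormula.IsAtomic.equal _ _).isQF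
    | rel R ts => exact (BoundedFormula.IsAtomic.rel _ _).isQF
  | imp h₁ h₂ ih₁ ih₂ => exact ih₁.imp ih₂

lemma isQF_substX {m : ℕ} {θ : Lor.Formula (Fin m ⊕ Fin 1)} (h : θ.IsQF)
    (t : Lor.Term (Fin m ⊕ Fin 1)) : (substX θ t).IsQF := isQF_subst h _

lemma isQF_conjShift {m : ℕ} {θ : Lor.Formula (Fin m ⊕ Fin 1)} (h : θ.IsQF) (j : ℕ) :
    (conjShift θ j).IsQF := by
  induction j with
  | zero => exact BoundedFormula.IsQF.top
  | succ j ih => exact ih.inf (isQF_substX h _)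

lemma isQF_ltFml {α : Type} (t u : Lor.Term α) : (ltFml t u).IsQF :=
  (BoundedFormula.IsAtomic.rel _ _).isQF

lemma isQF_leFml {α : Type} (t u : Lor.Term α) : (leFml t u).IsQF :=
  (isQF_ltFml t u).sup (BoundedFormula.IsAtomic.equal _ _).isQF

/-! ### The boundary lemma -/

/-- The hypothesis that `M` satisfies all quantifier-free induction axioms. -/
def HInd : Prop := ∀ (m : ℕ) (θ : Lor.Formula (Fin m ⊕ Fin 1)), θ.IsQF → M ⊨ indAx θ

/-- The basic semantic induction principle for quantifier-free formulas. -/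
lemma sInd (hind : HInd (M := M)) {m : ℕ} {θ : Lor.Formula (Fin m ⊕ Fin 1)} (hqf : θ.IsQF) (z : Fin m → M)
    (h0 : Rz θ z 0) (hs : ∀ x : M, Rz θ z x → Rz θ z (x + 1)) : ∀ x : M, Rz θ z x :=
  (realize_indAx θ).mp (hind m θ hqf) z ⟨h0, hs⟩

/-- The formula `u + x ≤ v → θ(u + x, z̄)` with two extra parameters `u, v`. -/
noncomputable def bForm {m : ℕ} (θ : Lor.Formula (Fin m ⊕ Fin 1)) :
    Lor.Formula (Fin (m + 1 + 1) ⊕ Fin 1) :=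
  leFml (addT (var (Sum.inl (Fin.castSucc (Fin.last m)))) xT)
      (var (Sum.inl (Fin.last (m + 1)))) ⟹
    θ.subst (Sum.elim (fun i => var (Sum.inl (Fin.castSucc (Fin.castSucc i))))
      fun _ => addT (var (Sum.inl (Fin.castSucc (Fin.last m)))) xT)

lemma isQF_bForm {m : ℕ} {θ : Lor.Formula (Fin m ⊕ Fin 1)} (h : θ.IsQF) : (bForm θ).IsQF :=
  (isQF_leFml _ _).imp (isQF_subst h _)

lemma realize_bForm {m : ℕ} (θ : Lor.Formula (Fin m ⊕ Fin 1)) (z : Fin m → M) (u v x : M) :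
    Rz (bForm θ) (Fin.snoc (Fin.snoc z u) v) x ↔ (u + x ≤ v → Rz θ z (u + x)) := by
  unfold bForm Rz
  rw [Formula.realize_imp, realize_leFml]
  apply imp_congr
  · apply iff_of_eq; congr 1
    · simp [mval, xT]
    · simp [mval]
  · refine Iff.trans BoundedFormula.realize_subst ?_
    apply iff_of_eq
    refine congrArg (fun v => Formula.Realize θ v) (funext fun a => ?_)
    cases a with
    | inl i => simp [mval]
    | inr j => simp [mval, xT]

/-- Boundary extraction: if `θ` holds at `u` and fails at `v ≥ u`, there is a
`w ∈ [u, v)` with `θ(w)` and `¬θ(w+1)`. -/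
lemma boundary (hind : HInd (M := M)) {m : ℕ} {θ : Lor.Formula (Fin m ⊕ Fin 1)} (hqf : θ.IsQF) (z : Fin m → M)
    {u v : M} (hu : Rz θ z u) (hv : ¬ Rz θ z v) (huv : u ≤ v) :
    ∃ w : M, u ≤ w ∧ w < v ∧ Rz θ z w ∧ ¬ Rz θ z (w + 1) := by
  by_contra hc
  push_neg at hc
  have key : ∀ x : M, Rz (bForm θ) (Fin.snoc (Fin.snoc z u) v) x := by
    apply sInd hind (isQF_bForm hqf)
    · rw [realize_bForm]
      intro _
      rwa [M_add_zero]
    · intro x hx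
      rw [realize_bForm] at hx ⊢
      intro hle
      have hxv : u + x < v := by
        have : u + x < u + (x + 1) := by
          rw [← M_add_assoc]; exact M_lt_add_one _
        exact lt_of_lt_of_le this hle
      have hθx : Rz θ z (u + x) := hx (le_of_lt hxv)
      have huw : u ≤ u + x := M_le_add_right u x
      have := hc (u + x) huw hxv hθx
      rwa [M_add_assoc] at this
  obtain ⟨c, hc'⟩ := M_exists_add_of_le huv
  have := (realize_bForm (M := M) θ z u v c).mp (key c)
  rw [hc'] at this
  exact hv (this le_rfl)


/-! ### Polynomial positivity sets and switch points -/

open Polynomial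

/-- `PPos p q x` means `p(x) - q(x) > 0`, i.e. `q(x) < p(x)`. -/
def PPos (p q : Polynomial M) (x : M) : Prop := q.eval x < p.eval x

/-- `PSw p q e` means the positivity status of `p - q` changes between `e` and `e+1`. -/
def PSw (p q : Polynomial M) (e : M) : Prop :=
  (PPos p q e ∧ ¬ PPos p q (e + 1)) ∨ (¬ PPos p q e ∧ PPos p q (e + 1))

/-- Power of a term. -/
def powT {α : Type} : ℕ → Lor.Term α → Lor.Term α
  | 0, _ => oneT
  | k + 1, t => mulT (powT k t) t

@[simp] lemma realize_powT {α : Type} (v : α → M) (k : ℕ) (t : Lor.Term α) :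
    (powT k t).realize v = (t.realize v) ^ k := by
  induction k with
  | zero => simp [powT, pow_zero]
  | succ k ih => simp [powT, ih, pow_succ]

/-- Sum of terms `f 0 + ⋯ + f k`. -/
def sumTerm {α : Type} (f : ℕ → Lor.Term α) : ℕ → Lor.Term α
  | 0 => f 0
  | k + 1 => addT (sumTerm f k) (f (k + 1))

lemma realize_sumTerm {α : Type} (v : α → M) (f : ℕ → Lor.Term α) (k : ℕ) :
    (sumTerm f k).realize v = ∑ i ∈ Finset.range (k + 1), (f i).realize v := by
  induction k with
  | zero => simp [sumTerm]
  | succ k ih =>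
    rw [sumTerm, realize_addT, ih]
    exact (Finset.sum_range_succ _ _).symm

def coefA (d i : ℕ) : Fin (d + 1 + (d + 1)) := ⟨min i d, by omega⟩
def coefB (d i : ℕ) : Fin (d + 1 + (d + 1)) := ⟨d + 1 + min i d, by omega⟩

/-- A generic quantifier-free formula expressing `∑ bᵢxⁱ < ∑ aᵢxⁱ`. -/
def polyPosF (d : ℕ) : Lor.Formula (Fin (d + 1 + (d + 1)) ⊕ Fin 1) :=
  ltFml (sumTerm (fun i => mulT (var (Sum.inl (coefB d i))) (powT i xT)) d)
        (sumTerm (fun i => mulT (var (Sum.inl (coefA d i))) (powT i xT)) d)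

lemma isQF_polyPosF (d : ℕ) : (polyPosF d).IsQF := isQF_ltFml _ _

/-- Packing the coefficients of `p` and `q` into a parameter list. -/
def packz (p q : Polynomial M) (d : ℕ) : Fin (d + 1 + (d + 1)) → M := fun j =>
  if (j : ℕ) < d + 1 then p.coeff j else q.coeff ((j : ℕ) - (d + 1))

lemma realize_polyPosF {p q : Polynomial M} {d : ℕ} (hp : p.natDegree ≤ d)
    (hq : q.natDegree ≤ d) (x : M) :
    Rz (polyPosF d) (packz p q d) x ↔ PPos p q x := by
  unfold polyPosF Rz
  rw [realize_ltFml, realize_sumTerm, realize_sumTerm]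
  have ha : ∀ i ∈ Finset.range (d + 1),
      ((fun i => mulT (var (Sum.inl (coefA d i))) (powT i xT)) i).realize
        (mval (packz p q d) x) = p.coeff i * x ^ i := by
    intro i hi
    rw [Finset.mem_range] at hi
    have hmin : min i d = i := min_eq_left (Nat.lt_succ_iff.mp hi)
    simp only [realize_mulT, realize_powT, realize_xT]
    congr 1
    show (mval (packz p q d) x) (Sum.inl (coefA d i)) = _
    simp only [mval, Sum.elim_inl, packz, coefA, hmin]
    rw [if_pos hi]
  have hb : ∀ i ∈ Finset.range (d + 1),
      ((fun i => mulT (var (Sum.inl (coefB d i))) (powT i xT)) i).realize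
        (mval (packz p q d) x) = q.coeff i * x ^ i := by
    intro i hi
    rw [Finset.mem_range] at hi
    have hmin : min i d = i := min_eq_left (Nat.lt_succ_iff.mp hi)
    simp only [realize_mulT, realize_powT, realize_xT]
    congr 1
    show (mval (packz p q d) x) (Sum.inl (coefB d i)) = _
    simp only [mval, Sum.elim_inl, packz, coefB, hmin]
    rw [if_neg (by omega), Nat.add_sub_cancel_left]
  rw [Finset.sum_congr rfl ha, Finset.sum_congr rfl hb]
  unfold PPos
  rw [eval_eq_sum_range' (Nat.lt_succ_of_le hp) x, eval_eq_sum_range' (Nat.lt_succ_of_le hq) x]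

/-- Down-switch extraction for polynomial positivity sets. -/
lemma pboundary_down (hind : HInd (M := M)) (p q : Polynomial M) {u v : M}
    (hu : PPos p q u) (hv : ¬ PPos p q v) (huv : u ≤ v) :
    ∃ w : M, u ≤ w ∧ w < v ∧ PPos p q w ∧ ¬ PPos p q (w + 1) := by
  set d := max p.natDegree q.natDegree with hd
  have hp : p.natDegree ≤ d := le_max_left _ _
  have hq : q.natDegree ≤ d := le_max_right _ _
  obtain ⟨w, h1, h2, h3, h4⟩ := boundary hind (isQF_polyPosF d) (packz p q d)
    ((realize_polyPosF hp hq u).mpr hu)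
    (fun hcon => hv ((realize_polyPosF hp hq v).mp hcon)) huv
  exact ⟨w, h1, h2, (realize_polyPosF hp hq w).mp h3,
    fun hcon => h4 ((realize_polyPosF hp hq (w + 1)).mpr hcon)⟩

lemma not_PPos_iff (p q : Polynomial M) (x : M) : ¬ PPos p q x ↔ PPos (q + 1) p x := by
  unfold PPos
  rw [eval_add, eval_one, not_lt, M_lt_add_one_iff_le]

/-- Up-switch extraction for polynomial positivity sets. -/
lemma pboundary_up (hind : HInd (M := M)) (p q : Polynomial M) {u v : M}
    (hu : ¬ PPos p q u) (hv : PPos p q v) (huv : u ≤ v) :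
    ∃ w : M, u ≤ w ∧ w < v ∧ ¬ PPos p q w ∧ PPos p q (w + 1) := by
  obtain ⟨w, h1, h2, h3, h4⟩ := pboundary_down hind (q + 1) p
    ((not_PPos_iff p q u).mp hu) (fun hcon => ((not_PPos_iff p q v).mpr hcon) hv) huv
  exact ⟨w, h1, h2, (not_PPos_iff p q w).mpr h3, by
    by_contra hcon
    exact h4 ((not_PPos_iff p q (w+1)).mp hcon)⟩

/-! ### Formal degree of a difference of polynomials, and the discrete derivative -/

/-- `DegLe p q d`: the formal difference `p - q` has degree at most `d`. -/
def DegLe (p q : Polynomial M) (d : ℕ) : Prop := ∀ i : ℕ, d < i → p.coeff i = q.coeff i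

lemma degLe_of_natDegree {p q : Polynomial M} {d : ℕ} (hp : p.natDegree ≤ d)
    (hq : q.natDegree ≤ d) : DegLe p q d := fun i hi => by
  rw [Polynomial.coeff_eq_zero_of_natDegree_lt (lt_of_le_of_lt hp hi),
    Polynomial.coeff_eq_zero_of_natDegree_lt (lt_of_le_of_lt hq hi)]

/-- First component of the discrete derivative pair of `(p, q)`. -/
noncomputable def dP (p q : Polynomial M) : Polynomial M := p.comp (X + 1) + q
/-- Second component of the discrete derivative pair of `(p, q)`. -/
noncomputable def dQ (p q : Polynomial M) : Polynomial M := q.comp (X + 1) + p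

lemma eval_comp_X_add_one (p : Polynomial M) (x : M) : (p.comp (X + 1)).eval x = p.eval (x + 1) := by
  rw [eval_comp, eval_add, eval_X, eval_one]

lemma PPos_delta_iff (p q : Polynomial M) (x : M) :
    PPos (dP p q) (dQ p q) x ↔ q.eval (x + 1) + p.eval x < p.eval (x + 1) + q.eval x := by
  unfold PPos dP dQ
  rw [eval_add, eval_add, eval_comp_X_add_one, eval_comp_X_add_one]

lemma coeff_comp_X_add_one (p : Polynomial M) {N : ℕ} (hN : p.natDegree < N) (i : ℕ) :
    (p.comp (X + 1)).coeff i = ∑ j ∈ Finset.range N, p.coeff j * (j.choose i : M) := by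
  rw [comp_eq_sum_left, Polynomial.coeff_sum]
  rw [Polynomial.sum_over_range' p (fun n => by simp) N hN]
  apply Finset.sum_congr rfl
  intro j _
  rw [coeff_C_mul, coeff_X_add_one_pow]

/-- The discrete derivative drops the formal degree. -/
lemma degLe_delta {p q : Polynomial M} {d : ℕ} (h : DegLe p q (d + 1)) :
    DegLe (dP p q) (dQ p q) d := by
  intro i hi
  set N := max p.natDegree q.natDegree + 1 with hN
  have hpN : p.natDegree < N := by omega
  have hqN : q.natDegree < N := by omega
  unfold dP dQ
  rw [coeff_add, coeff_add, coeff_comp_X_add_one p hpN i, coeff_comp_X_add_one q hqN i]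
  by_cases hiN : i < N
  · -- split off the `j = i` term
    have hmem : i ∈ Finset.range N := Finset.mem_range.mpr hiN
    rw [← Finset.add_sum_erase _ _ hmem, ← Finset.add_sum_erase _ _ hmem]
    have htail : ∑ j ∈ (Finset.range N).erase i, p.coeff j * (j.choose i : M) =
        ∑ j ∈ (Finset.range N).erase i, q.coeff j * (j.choose i : M) := by
      apply Finset.sum_congr rfl
      intro j hj
      rcases lt_or_gt_of_ne (Finset.ne_of_mem_erase hj) with hji | hji
      · rw [Nat.choose_eq_zero_of_lt hji, Nat.cast_zero, mul_zero, mul_zero]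
      · rw [h j (by omega)]
    rw [htail, Nat.choose_self, Nat.cast_one, mul_one, mul_one]
    rw [add_comm (p.coeff i) _, add_assoc, add_comm (q.coeff i) _, add_assoc,
      add_comm (p.coeff i) (q.coeff i)]
  · -- `i ≥ N`: everything vanishes
    have hz : ∀ j ∈ Finset.range N, p.coeff j * (j.choose i : M) = 0 := by
      intro j hj
      rw [Finset.mem_range] at hj
      rw [Nat.choose_eq_zero_of_lt (by omega), Nat.cast_zero, mul_zero]
    have hz' : ∀ j ∈ Finset.range N, q.coeff j * (j.choose i : M) = 0 := by
      intro j hj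
      rw [Finset.mem_range] at hj
      rw [Nat.choose_eq_zero_of_lt (by omega), Nat.cast_zero, mul_zero]
    rw [Finset.sum_congr rfl hz, Finset.sum_congr rfl hz',
      Polynomial.coeff_eq_zero_of_natDegree_lt (by omega : p.natDegree < i),
      Polynomial.coeff_eq_zero_of_natDegree_lt (by omega : q.natDegree < i)]

/-- If the formal difference is constant, the positivity status never changes. -/
lemma pos_const {p q : Polynomial M} (h : DegLe p q 0) (x y : M) :
    PPos p q x ↔ PPos p q y := by
  set N := max p.natDegree q.natDegree + 1 with hN
  have hpN : p.natDegree < N := by omega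
  have hqN : q.natDegree < N := by omega
  have key : ∀ z : M, (PPos p q z ↔ q.coeff 0 < p.coeff 0) := by
    intro z
    unfold PPos
    rw [eval_eq_sum_range' hpN z, eval_eq_sum_range' hqN z, Finset.sum_range_succ',
      Finset.sum_range_succ']
    have htail : ∑ i ∈ Finset.range (max p.natDegree q.natDegree),
        p.coeff (i + 1) * z ^ (i + 1) =
        ∑ i ∈ Finset.range (max p.natDegree q.natDegree), q.coeff (i + 1) * z ^ (i + 1) := by
      apply Finset.sum_congr rfl
      intro j _
      rw [h (j + 1) (Nat.succ_pos j)]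
    rw [htail, pow_zero, mul_one, mul_one]
    constructor
    · intro hlt
      refine M_lt_of_add_lt_add_right (c := ∑ i ∈ Finset.range (max p.natDegree q.natDegree),
        q.coeff (i + 1) * z ^ (i + 1)) ?_
      rw [M_add_comm (q.coeff 0), M_add_comm (p.coeff 0)]
      exact hlt
    · intro hlt
      exact M_add_lt_add_left hlt _
  rw [key x, key y]

/-! ### Between two switch points of `(p,q)` there is a switch point of the derivative -/

lemma delta_pos_of_up {p q : Polynomial M} {e : M} (h1 : ¬ PPos p q e) (h2 : PPos p q (e + 1)) :
    PPos (dP p q) (dQ p q) e := by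
  rw [PPos_delta_iff]
  unfold PPos at h1 h2
  rw [not_lt] at h1
  exact M_add_lt_add_of_lt_of_le h2 h1

lemma delta_neg_of_down {p q : Polynomial M} {e : M} (h1 : PPos p q e) (h2 : ¬ PPos p q (e + 1)) :
    ¬ PPos (dP p q) (dQ p q) e := by
  rw [PPos_delta_iff, not_lt]
  unfold PPos at h1 h2
  rw [not_lt] at h2
  exact le_of_lt (M_add_lt_add_of_le_of_lt h2 h1)

lemma between_switch (hind : HInd (M := M)) {p q : Polynomial M} {e e' : M}
    (he : PSw p q e) (he' : PSw p q e') (hlt : e < e') :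
    ∃ w : M, e ≤ w ∧ w < e' ∧ PSw (dP p q) (dQ p q) w := by
  have he1 : e + 1 ≤ e' := M_add_one_le_of_lt hlt
  rcases he with ⟨hd1, hd2⟩ | ⟨hu1, hu2⟩
  · -- `e` is a down-switch, so `¬ΔPos e`
    have hΔe : ¬ PPos (dP p q) (dQ p q) e := delta_neg_of_down hd1 hd2
    rcases he' with ⟨hd1', hd2'⟩ | ⟨hu1', hu2'⟩
    · -- `e'` down: find an up-switch `w₀ ∈ [e+1, e')` of `(p,q)`
      have hne : e + 1 ≠ e' := by
        intro hcon
        rw [hcon] at hd2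
        exact hd2 hd1'
      have hlt1 : e + 1 < e' := lt_of_le_of_ne he1 hne
      obtain ⟨w₀, hw1, hw2, hw3, hw4⟩ := pboundary_up hind p q hd2 hd1' (le_of_lt hlt1)
      have hΔw₀ : PPos (dP p q) (dQ p q) w₀ := delta_pos_of_up hw3 hw4
      obtain ⟨w, hww1, hww2, hww3, hww4⟩ := pboundary_up hind (dP p q) (dQ p q) hΔe hΔw₀
        (le_trans (le_of_lt (M_lt_add_one e)) hw1)
      exact ⟨w, hww1, lt_trans hww2 hw2, Or.inr ⟨hww3, hww4⟩⟩
    · -- `e'` up: `ΔPos e'`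
      have hΔe' : PPos (dP p q) (dQ p q) e' := delta_pos_of_up hu1' hu2'
      obtain ⟨w, hw1, hw2, hw3, hw4⟩ := pboundary_up hind (dP p q) (dQ p q) hΔe hΔe'
        (le_of_lt hlt)
      exact ⟨w, hw1, hw2, Or.inr ⟨hw3, hw4⟩⟩
  · -- `e` is an up-switch, so `ΔPos e`
    have hΔe : PPos (dP p q) (dQ p q) e := delta_pos_of_up hu1 hu2
    rcases he' with ⟨hd1', hd2'⟩ | ⟨hu1', hu2'⟩
    · -- `e'` down: `¬ΔPos e'`
      have hΔe' : ¬ PPos (dP p q) (dQ p q) e' := delta_neg_of_down hd1' hd2'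
      obtain ⟨w, hw1, hw2, hw3, hw4⟩ := pboundary_down hind (dP p q) (dQ p q) hΔe hΔe'
        (le_of_lt hlt)
      exact ⟨w, hw1, hw2, Or.inl ⟨hw3, hw4⟩⟩
    · -- `e'` up: find a down-switch `w₀ ∈ [e+1, e')` of `(p,q)`
      have hne : e + 1 ≠ e' := by
        intro hcon
        rw [hcon] at hu2
        exact hu1' hu2
      have hlt1 : e + 1 < e' := lt_of_le_of_ne he1 hne
      obtain ⟨w₀, hw1, hw2, hw3, hw4⟩ := pboundary_down hind p q hu2 hu1' (le_of_lt hlt1)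
      have hΔw₀ : ¬ PPos (dP p q) (dQ p q) w₀ := delta_neg_of_down hw3 hw4
      obtain ⟨w, hww1, hww2, hww3, hww4⟩ := pboundary_down hind (dP p q) (dQ p q) hΔe hΔw₀
        (le_trans (le_of_lt (M_lt_add_one e)) hw1)
      exact ⟨w, hww1, lt_trans hww2 hw2, Or.inl ⟨hww3, hww4⟩⟩

/-- A formal difference of degree at most `d` has at most `d` switch points. -/
lemma switch_bound (hind : HInd (M := M)) :
    ∀ d : ℕ, ∀ p q : Polynomial M, DegLe p q d →
      ∀ e : Fin (d + 1) → M, StrictMono e → (∀ i, PSw p q (e i)) → False := by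
  intro d
  induction d with
  | zero =>
    intro p q hdeg e _ hsw
    rcases hsw 0 with ⟨h1, h2⟩ | ⟨h1, h2⟩
    · exact h2 ((pos_const hdeg _ _).mp h1)
    · exact h1 ((pos_const hdeg _ _).mpr h2)
  | succ d ih =>
    intro p q hdeg e hmono hsw
    -- build `d+1` switch points of the derivative pair
    have hbtw : ∀ i : Fin (d + 1), ∃ w : M,
        e i.castSucc ≤ w ∧ w < e i.succ ∧ PSw (dP p q) (dQ p q) w :=
      fun i => between_switch hind (hsw i.castSucc) (hsw i.succ)
        (hmono (Fin.castSucc_lt_succ (i := i)))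
    choose w hw1 hw2 hw3 using hbtw
    apply ih (dP p q) (dQ p q) (degLe_delta hdeg) w ?_ hw3
    intro i j hij
    calc w i < e i.succ := hw2 i
    _ ≤ e j.castSucc := by
      rcases eq_or_lt_of_le (show (i.succ : Fin (d + 2)) ≤ j.castSucc by
        rw [Fin.le_def, Fin.val_succ, Fin.coe_castSucc]
        have hv : (i : ℕ) < (j : ℕ) := Fin.lt_def.mp hij
        omega) with h | h
      · rw [h]
      · exact le_of_lt (hmono h)
    _ ≤ w j := hw1 j

/-! ### Every term is a polynomial in the distinguished variable -/

lemma funMap_zero_eq (r : Fin 0 → M) : Structure.funMap (L := Lor) LorFunc.zero r = (0 : M) :=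
  congrArg (Structure.funMap (L := Lor) LorFunc.zero) (Subsingleton.elim _ _)

lemma funMap_one_eq (r : Fin 0 → M) : Structure.funMap (L := Lor) LorFunc.one r = (1 : M) :=
  congrArg (Structure.funMap (L := Lor) LorFunc.one) (Subsingleton.elim _ _)

lemma funMap_add_eq (r : Fin 2 → M) : Structure.funMap (L := Lor) LorFunc.add r = r 0 + r 1 := by
  have h : r = ![r 0, r 1] := funext fun i => by fin_cases i <;> rfl
  conv_lhs => rw [h]
  rfl

lemma funMap_mul_eq (r : Fin 2 → M) : Structure.funMap (L := Lor) LorFunc.mul r = r 0 * r 1 := by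
  have h : r = ![r 0, r 1] := funext fun i => by fin_cases i <;> rfl
  conv_lhs => rw [h]
  rfl

lemma relMap_lt_eq (r : Fin 2 → M) : Structure.RelMap (L := Lor) LorRel.lt r ↔ r 0 < r 1 := by
  have h : r = ![r 0, r 1] := funext fun i => by fin_cases i <;> rfl
  rw [h]
  exact Iff.rfl

lemma term_poly {m : ℕ} (t : Lor.Term ((Fin m ⊕ Fin 1) ⊕ Fin 0)) (z : Fin m → M)
    (xs : Fin 0 → M) :
    ∃ P : Polynomial M, ∀ x : M, t.realize (Sum.elim (mval z x) xs) = P.eval x := by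
  induction t with
  | var a =>
    rcases a with (i | j) | k
    · exact ⟨Polynomial.C (z i), fun x => by simp [mval]⟩
    · exact ⟨Polynomial.X, fun x => by simp [mval]⟩
    · exact k.elim0
  | func f ts ih =>
    cases f with
    | zero => exact ⟨0, fun x => by erw [Term.realize_func]; rw [funMap_zero_eq]; simp⟩
    | one => exact ⟨1, fun x => by erw [Term.realize_func]; rw [funMap_one_eq]; simp⟩
    | add =>
      obtain ⟨P₀, hP₀⟩ := ih 0
      obtain ⟨P₁, hP₁⟩ := ih 1
      refine ⟨P₀ + P₁, fun x => ?_⟩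
      erw [Term.realize_func]; rw [funMap_add_eq]
      simp [hP₀ x, hP₁ x]
    | mul =>
      obtain ⟨P₀, hP₀⟩ := ih 0
      obtain ⟨P₁, hP₁⟩ := ih 1
      refine ⟨P₀ * P₁, fun x => ?_⟩
      erw [Term.realize_func]; rw [funMap_mul_eq]
      simp [hP₀ x, hP₁ x]

/-! ### Switch points of a quantifier-free formula come from its atoms -/

lemma eq_iff_not_pos {a b : M} : a = b ↔ (¬ b < a ∧ ¬ a < b) := by
  constructor
  · rintro rfl; exact ⟨M_lt_irrefl a, M_lt_irrefl a⟩
  · rintro ⟨h1, h2⟩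
    rcases M_lt_total a b with h | h | h
    · exact absurd h h2
    · exact h
    · exact absurd h h1

lemma stable_of_not_PSw {p q : Polynomial M} {e : M} (h : ¬ PSw p q e) :
    PPos p q e ↔ PPos p q (e + 1) := by
  unfold PSw at h
  push_neg at h
  exact ⟨h.1, fun hB => by
    by_contra hA
    exact h.2 hA hB⟩

lemma qf_atoms {m : ℕ} {θ : Lor.Formula (Fin m ⊕ Fin 1)} (hqf : θ.IsQF) (z : Fin m → M) :
    ∃ L : List (Polynomial M × Polynomial M),
      ∀ e : M, ¬ (Rz θ z e ↔ Rz θ z (e + 1)) → ∃ pq ∈ L, PSw pq.1 pq.2 e := by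
  induction hqf with
  | falsum =>
    exact ⟨[], fun e h => absurd (iff_of_false (fun h' => h') fun h' => h') h⟩
  | @of_isAtomic φ h =>
    cases h with
    | equal t₁ t₂ =>
      obtain ⟨P₁, hP₁⟩ := term_poly t₁ z default
      obtain ⟨P₂, hP₂⟩ := term_poly t₂ z default
      refine ⟨[(P₁, P₂), (P₂, P₁)], fun e h => ?_⟩
      by_contra hc
      push_neg at hc
      have h12 := stable_of_not_PSw (hc (P₁, P₂) (by simp))
      have h21 := stable_of_not_PSw (hc (P₂, P₁) (by simp))
      apply h
      have key : ∀ y : M, Rz (t₁.bdEqual t₂) z y ↔ (P₁.eval y = P₂.eval y) := by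
        intro y
        unfold Rz
        rw [show Formula.Realize (t₁.bdEqual t₂) (mval z y) =
          BoundedFormula.Realize (t₁.bdEqual t₂) (mval z y) default from rfl]
        rw [BoundedFormula.realize_bdEqual, hP₁ y, hP₂ y]
      rw [key e, key (e + 1), eq_iff_not_pos, eq_iff_not_pos]
      exact and_congr (not_congr h12) (not_congr h21)
    | @rel l R ts =>
      cases R
      obtain ⟨P₀, hP₀⟩ := term_poly (ts 0) z default
      obtain ⟨P₁, hP₁⟩ := term_poly (ts 1) z default
      refine ⟨[(P₁, P₀)], fun e h => ?_⟩
      by_contra hc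
      push_neg at hc
      have h10 := stable_of_not_PSw (hc (P₁, P₀) (by simp))
      apply h
      have key : ∀ y : M, Rz (Relations.boundedFormula LorRel.lt ts) z y ↔ PPos P₁ P₀ y := by
        intro y
        unfold Rz
        rw [show Formula.Realize (Relations.boundedFormula LorRel.lt ts) (mval z y) =
          BoundedFormula.Realize (Relations.boundedFormula LorRel.lt ts) (mval z y) default
          from rfl]
        erw [BoundedFormula.realize_rel]; rw [relMap_lt_eq]
        unfold PPos
        rw [hP₀ y, hP₁ y]
      rw [key e, key (e + 1)]
      exact h10
  | @imp φ₁ φ₂ h₁ h₂ ih₁ ih₂ =>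
    obtain ⟨L₁, hL₁⟩ := ih₁
    obtain ⟨L₂, hL₂⟩ := ih₂
    refine ⟨L₁ ++ L₂, fun e h => ?_⟩
    by_contra hc
    push_neg at hc
    have st₁ : Rz φ₁ z e ↔ Rz φ₁ z (e + 1) := by
      by_contra h'
      obtain ⟨pq, hm, hsw⟩ := hL₁ e h'
      exact hc pq (List.mem_append_left _ hm) hsw
    have st₂ : Rz φ₂ z e ↔ Rz φ₂ z (e + 1) := by
      by_contra h'
      obtain ⟨pq, hm, hsw⟩ := hL₂ e h'
      exact hc pq (List.mem_append_right _ hm) hsw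
    apply h
    unfold Rz
    rw [show Formula.Realize (φ₁.imp φ₂) (mval z e) =
      BoundedFormula.Realize (φ₁.imp φ₂) (mval z e) default from rfl]
    rw [show Formula.Realize (φ₁.imp φ₂) (mval z (e + 1)) =
      BoundedFormula.Realize (φ₁.imp φ₂) (mval z (e + 1)) default from rfl]
    rw [BoundedFormula.realize_imp, BoundedFormula.realize_imp]
    exact imp_congr st₁ st₂

/-! ### Open least number principle: `<`-induction holds for quantifier-free formulas -/

lemma M_not_lt_zero (x : M) : ¬ x < 0 := fun hx =>
  M_lt_irrefl 0 (lt_of_le_of_lt (M_zero_le x) hx)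

lemma open_lnp (hind : HInd (M := M)) {m : ℕ} {θ : Lor.Formula (Fin m ⊕ Fin 1)}
    (hqf : θ.IsQF) (z : Fin m → M)
    (hprog : ∀ y : M, (∀ x : M, x < y → Rz θ z x) → Rz θ z y) : ∀ b : M, Rz θ z b := by
  have Θ0 : Rz θ z 0 := hprog 0 fun x hx => absurd hx (M_not_lt_zero x)
  intro b
  by_contra hb
  -- a "down-switch" below any failure point
  have step : ∀ t : M, ¬ Rz θ z t → ∃ w, w < t ∧ Rz θ z w ∧ ¬ Rz θ z (w + 1) := by
    intro t ht
    obtain ⟨w, _, hw2, hw3, hw4⟩ := boundary hind hqf z Θ0 ht (M_zero_le t)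
    exact ⟨w, hw2, hw3, hw4⟩
  -- below a down-switch there is another down-switch
  have next : ∀ w : M, (Rz θ z w ∧ ¬ Rz θ z (w + 1)) →
      ∃ w', w' < w ∧ (Rz θ z w' ∧ ¬ Rz θ z (w' + 1)) := by
    intro w hw
    have hf : ∃ f : M, f < w + 1 ∧ ¬ Rz θ z f := by
      by_contra hcon
      push_neg at hcon
      exact hw.2 (hprog (w + 1) hcon)
    obtain ⟨f, hf1, hf2⟩ := hf
    obtain ⟨w', hw'1, hw'2, hw'3⟩ := step f hf2
    exact ⟨w', lt_of_lt_of_le hw'1 (M_lt_add_one_iff_le.mp hf1), hw'2, hw'3⟩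
  -- an infinite descending sequence of down-switches
  have hseq : ∃ g : ℕ → M, (∀ n, Rz θ z (g n) ∧ ¬ Rz θ z (g n + 1)) ∧ ∀ n, g (n + 1) < g n := by
    choose f hf using next
    obtain ⟨w₀, _, hw₀2, hw₀3⟩ := step b hb
    let G : ℕ → {w : M // Rz θ z w ∧ ¬ Rz θ z (w + 1)} := fun n =>
      Nat.rec ⟨w₀, hw₀2, hw₀3⟩ (fun _ p => ⟨f p.1 p.2, (hf p.1 p.2).2⟩) n
    exact ⟨fun n => (G n).1, fun n => (G n).2, fun n => (hf (G n).1 (G n).2).1⟩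
  obtain ⟨g, hgDS, hgdec⟩ := hseq
  have ganti : StrictAnti g := strictAnti_nat_of_succ_lt hgdec
  -- the atoms of `θ`
  obtain ⟨L, hL⟩ := qf_atoms hqf z
  set N : ℕ := ∑ k : Fin L.length, (max (L.get k).1.natDegree (L.get k).2.natDegree + 1) with hN
  set E : Fin (N + 1) → M := fun i => g (N - (i : ℕ)) with hE
  have Emono : StrictMono E := by
    intro i j hij
    apply ganti
    have h1 : (i : ℕ) < (j : ℕ) := Fin.lt_def.mp hij
    have h2 : (j : ℕ) < N + 1 := j.isLt
    omega
  have Esw : ∀ i, ¬ (Rz θ z (E i) ↔ Rz θ z (E i + 1)) := fun i hiff =>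
    (hgDS _).2 (hiff.mp (hgDS _).1)
  have hidx : ∀ i : Fin (N + 1), ∃ k : Fin L.length, PSw (L.get k).1 (L.get k).2 (E i) := by
    intro i
    obtain ⟨pq, hm, hsw⟩ := hL (E i) (Esw i)
    obtain ⟨k, hk⟩ := List.mem_iff_get.mp hm
    exact ⟨k, by rw [hk]; exact hsw⟩
  choose F hF using hidx
  have hcards : (Finset.univ : Finset (Fin (N + 1))).card =
      ∑ k : Fin L.length, (Finset.univ.filter fun i => F i = k).card :=
    Finset.card_eq_sum_card_fiberwise fun i _ => Finset.mem_univ (F i)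
  have hex : ∃ k : Fin L.length,
      max (L.get k).1.natDegree (L.get k).2.natDegree + 1 <
        (Finset.univ.filter fun i => F i = k).card := by
    by_contra hcon
    push_neg at hcon
    have hle : ∑ k : Fin L.length, (Finset.univ.filter fun i => F i = k).card ≤ N :=
      Finset.sum_le_sum fun k _ => hcon k
    rw [← hcards, Finset.card_univ, Fintype.card_fin] at hle
    omega
  obtain ⟨k, hk⟩ := hex
  set d : ℕ := max (L.get k).1.natDegree (L.get k).2.natDegree with hd
  set T : Finset (Fin (N + 1)) := Finset.univ.filter (fun i => F i = k) with hT
  have hTcard : d + 1 ≤ T.card := le_of_lt hk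
  let iso := T.orderIsoOfFin rfl
  set e' : Fin (d + 1) → M := fun j => E ((iso (Fin.castLE hTcard j)) : Fin (N + 1)) with he'
  have e'mono : StrictMono e' := by
    intro i j hij
    apply Emono
    have : Fin.castLE hTcard i < Fin.castLE hTcard j := by
      rw [Fin.lt_def] at hij ⊢
      exact hij
    exact iso.strictMono this
  have e'sw : ∀ j : Fin (d + 1), PSw (L.get k).1 (L.get k).2 (e' j) := by
    intro j
    have hmem : ((iso (Fin.castLE hTcard j)) : Fin (N + 1)) ∈
        Finset.univ.filter (fun i => F i = k) := (iso (Fin.castLE hTcard j)).2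
    have h2 : F ((iso (Fin.castLE hTcard j)) : Fin (N + 1)) = k :=
      (Finset.mem_filter.mp hmem).2
    have h3 := hF ((iso (Fin.castLE hTcard j)) : Fin (N + 1))
    rw [h2] at h3
    exact h3
  exact switch_bound hind d (L.get k).1 (L.get k).2
    (degLe_of_natDegree (le_max_left _ _) (le_max_right _ _)) e' e'mono e'sw

/-- Quantifier-free `<`-induction holds in any model of quantifier-free induction. -/
lemma models_indLtAx (hind : HInd (M := M)) {m : ℕ} (θ : Lor.Formula (Fin m ⊕ Fin 1))
    (hqf : θ.IsQF) : M ⊨ indLtAx θ :=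
  (realize_indLtAx θ).mpr fun z hprog x => open_lnp hind hqf z
    (fun y hy => hprog y fun x' hx' => hy x' hx') x

/-! ### The easy mutual derivations between the induction schemes -/

lemma M_eq_add_one_of_pos {y : M} (h : (0 : M) < y) : ∃ w : M, w + 1 = y := by
  obtain ⟨c, hc⟩ := M_exists_add_one_of_lt h
  rw [zero_add] at hc
  exact ⟨c, hc⟩

/-- Ordinary induction from `<`-induction (for the same formula). -/
lemma models_indAx_of_Lt
    (hLt : ∀ (m : ℕ) (θ : Lor.Formula (Fin m ⊕ Fin 1)), θ.IsQF → M ⊨ indLtAx θ)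
    {m : ℕ} (θ : Lor.Formula (Fin m ⊕ Fin 1)) (hqf : θ.IsQF) : M ⊨ indAx θ := by
  rw [realize_indAx]
  rintro z ⟨h0, hs⟩
  apply (realize_indLtAx θ).mp (hLt m θ hqf) z
  intro y hy
  rcases eq_or_ne y 0 with rfl | hne
  · exact h0
  · obtain ⟨w, hw⟩ := M_eq_add_one_of_pos (M_pos_of_ne_zero hne)
    have hwy : w < y := by rw [← hw]; exact M_lt_add_one w
    rw [← hw]
    exact hs w (hy w hwy)

lemma cast_rz_succ {mm : ℕ} (θ : Lor.Formula (Fin mm ⊕ Fin 1)) (z : Fin mm → M) (k : ℕ) :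
    ((k + 1 : ℕ) : M) = ((k : ℕ) : M) + 1 := by
  push_cast
  ring

/-- `θ(x) → θ(x + k)` for each standard `k`, from ordinary induction premises. -/
lemma rz_add_nat {m : ℕ} {θ : Lor.Formula (Fin m ⊕ Fin 1)} {z : Fin m → M}
    (hs : ∀ x : M, Rz θ z x → Rz θ z (x + 1)) (k : ℕ) :
    ∀ x : M, Rz θ z x → Rz θ z (x + (k : M)) := by
  induction k with
  | zero => intro x hx; rwa [Nat.cast_zero, add_zero]
  | succ k ih =>
    intro x hx
    have : ((k + 1 : ℕ) : M) = (k : M) + 1 := by push_cast; ring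
    rw [this, ← M_add_assoc]
    exact hs _ (ih x hx)

/-- `θ(k)` for each standard `k`, from ordinary induction premises. -/
lemma rz_nat {m : ℕ} {θ : Lor.Formula (Fin m ⊕ Fin 1)} {z : Fin m → M}
    (h0 : Rz θ z 0) (hs : ∀ x : M, Rz θ z x → Rz θ z (x + 1)) (k : ℕ) : Rz θ z (k : M) := by
  induction k with
  | zero => rwa [Nat.cast_zero]
  | succ k ih =>
    have : ((k + 1 : ℕ) : M) = (k : M) + 1 := by push_cast; ring
    rw [this]
    exact hs _ ih

/-- Ordinary induction from `(n+1)`-step induction (for the same formula). -/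
lemma models_indAx_of_Step (n : ℕ)
    (hStep : ∀ (m : ℕ) (θ : Lor.Formula (Fin m ⊕ Fin 1)), θ.IsQF → M ⊨ indStepAx n θ)
    {m : ℕ} (θ : Lor.Formula (Fin m ⊕ Fin 1)) (hqf : θ.IsQF) : M ⊨ indAx θ := by
  rw [realize_indAx]
  rintro z ⟨h0, hs⟩
  apply (realize_indStepAx n θ).mp (hStep m θ hqf) z
  refine ⟨fun k _ => rz_nat h0 hs k, fun x hx => ?_⟩
  have := rz_add_nat hs (n + 1) x hx
  rwa [show ((n + 1 : ℕ) : M) = (n : M) + 1 by push_cast; ring] at this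

/-- Ordinary induction from `(n+1)`-induction (for the same formula). -/
lemma models_indAx_of_K (n : ℕ)
    (hK : ∀ (m : ℕ) (θ : Lor.Formula (Fin m ⊕ Fin 1)), θ.IsQF → M ⊨ indKAx n θ)
    {m : ℕ} (θ : Lor.Formula (Fin m ⊕ Fin 1)) (hqf : θ.IsQF) : M ⊨ indAx θ := by
  rw [realize_indAx]
  rintro z ⟨h0, hs⟩
  apply (realize_indKAx n θ).mp (hK m θ hqf) z
  refine ⟨fun k _ => rz_nat h0 hs k, fun x hx => ?_⟩
  have hxn : Rz θ z (x + (n : M)) := hx n (Nat.lt_succ_self n)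
  have := hs _ hxn
  rwa [M_add_assoc] at this

lemma M_succ_add_cast (y : M) (k : ℕ) : y + 1 + (k : M) = y + ((k + 1 : ℕ) : M) := by
  push_cast
  rw [M_add_assoc, M_add_comm 1 (k : M)]

/-- `(n+1)`-step induction from ordinary quantifier-free induction. -/
lemma models_indStepAx_of_ind (hind : HInd (M := M)) (n : ℕ)
    {m : ℕ} (θ : Lor.Formula (Fin m ⊕ Fin 1)) (hqf : θ.IsQF) : M ⊨ indStepAx n θ := by
  rw [realize_indStepAx]
  rintro z ⟨hc, hstep⟩ x
  have key : ∀ y : M, Rz (conjShift θ (n + 1)) z y := by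
    apply sInd hind (isQF_conjShift hqf (n + 1))
    · unfold Rz
      rw [realize_conjShift]
      intro k hk
      rw [zero_add]
      exact hc k hk
    · intro y hy
      unfold Rz at hy ⊢
      rw [realize_conjShift] at hy ⊢
      intro k hk
      rw [show y + 1 + (k : M) = y + ((k + 1 : ℕ) : M) from M_succ_add_cast y k]
      rcases Nat.lt_succ_iff_lt_or_eq.mp hk with hlt | hkeq
      · exact hy (k + 1) (by omega)
      · have hy0 : Rz θ z y := by
          have h0 := hy 0 (Nat.succ_pos n)
          rwa [Nat.cast_zero, add_zero] at h0
        have h1 := hstep y hy0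
        rwa [hkeq, show ((n + 1 : ℕ) : M) = (n : M) + 1 by push_cast; ring]
  have hx := key x
  unfold Rz at hx
  rw [realize_conjShift] at hx
  have h0 := hx 0 (Nat.succ_pos n)
  rw [Nat.cast_zero, add_zero] at h0
  exact h0

/-- `(n+1)`-induction from ordinary quantifier-free induction. -/
lemma models_indKAx_of_ind (hind : HInd (M := M)) (n : ℕ)
    {m : ℕ} (θ : Lor.Formula (Fin m ⊕ Fin 1)) (hqf : θ.IsQF) : M ⊨ indKAx n θ := by
  rw [realize_indKAx]
  rintro z ⟨hc, hstep⟩ x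
  have key : ∀ y : M, Rz (conjShift θ (n + 1)) z y := by
    apply sInd hind (isQF_conjShift hqf (n + 1))
    · unfold Rz
      rw [realize_conjShift]
      intro k hk
      rw [zero_add]
      exact hc k hk
    · intro y hy
      unfold Rz at hy ⊢
      rw [realize_conjShift] at hy ⊢
      intro k hk
      rw [show y + 1 + (k : M) = y + ((k + 1 : ℕ) : M) from M_succ_add_cast y k]
      rcases Nat.lt_succ_iff_lt_or_eq.mp hk with hlt | hkeq
      · exact hy (k + 1) (by omega)
      · have h1 := hstep y hy
        rwa [hkeq, show ((n + 1 : ℕ) : M) = (n : M) + 1 by push_cast; ring]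
  have hx := key x
  unfold Rz at hx
  rw [realize_conjShift] at hx
  have h0 := hx 0 (Nat.succ_pos n)
  rw [Nat.cast_zero, add_zero] at h0
  exact h0

end ModelSetup

/-! ### Model-class equivalences between the four theories -/

section Assembly

variable {M : Type} [Nonempty M] [Lor.Structure M]

lemma hind_of_IOpen [IOpen.Model M] : HInd (M := M) := fun m θ hqf =>
  IOpen.realize_sentence_of_mem (M := M) (Set.mem_union_right _ ⟨m, θ, hqf, rfl⟩)

lemma model_Lt_of_IOpen [IOpen.Model M] : IOpenLt.Model M := by
  haveI hPA : PAminus.Model M := Theory.Model.mono (inferInstance : IOpen.Model M)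
    (by unfold IOpen; exact Set.subset_union_left)
  rw [Theory.model_iff]
  rintro φ (hmem | ⟨m, θ, hqf, rfl⟩)
  · exact PAminus.realize_sentence_of_mem hmem
  · exact models_indLtAx hind_of_IOpen θ hqf

lemma model_IOpen_of_Lt [IOpenLt.Model M] : IOpen.Model M := by
  haveI hPA : PAminus.Model M := Theory.Model.mono (inferInstance : IOpenLt.Model M)
    (by unfold IOpenLt; exact Set.subset_union_left)
  rw [Theory.model_iff]
  rintro φ (hmem | ⟨m, θ, hqf, rfl⟩)
  · exact PAminus.realize_sentence_of_mem hmem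
  · exact models_indAx_of_Lt
      (fun m' θ' hqf' => IOpenLt.realize_sentence_of_mem (M := M)
        (Set.mem_union_right _ ⟨m', θ', hqf', rfl⟩)) θ hqf

lemma model_Step_of_IOpen (n : ℕ) [IOpen.Model M] : (IOpenStep n).Model M := by
  haveI hPA : PAminus.Model M := Theory.Model.mono (inferInstance : IOpen.Model M)
    (by unfold IOpen; exact Set.subset_union_left)
  rw [Theory.model_iff]
  rintro φ (hmem | ⟨m, θ, hqf, rfl⟩)
  · exact PAminus.realize_sentence_of_mem hmem
  · exact models_indStepAx_of_ind hind_of_IOpen n θ hqf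

lemma model_IOpen_of_Step (n : ℕ) [(IOpenStep n).Model M] : IOpen.Model M := by
  haveI hPA : PAminus.Model M := Theory.Model.mono (inferInstance : (IOpenStep n).Model M)
    (by unfold IOpenStep; exact Set.subset_union_left)
  rw [Theory.model_iff]
  rintro φ (hmem | ⟨m, θ, hqf, rfl⟩)
  · exact PAminus.realize_sentence_of_mem hmem
  · exact models_indAx_of_Step n
      (fun m' θ' hqf' => (IOpenStep n).realize_sentence_of_mem (M := M)
        (Set.mem_union_right _ ⟨m', θ', hqf', rfl⟩)) θ hqf

lemma model_K_of_IOpen (n : ℕ) [IOpen.Model M] : (IOpenK n).Model M := by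
  haveI hPA : PAminus.Model M := Theory.Model.mono (inferInstance : IOpen.Model M)
    (by unfold IOpen; exact Set.subset_union_left)
  rw [Theory.model_iff]
  rintro φ (hmem | ⟨m, θ, hqf, rfl⟩)
  · exact PAminus.realize_sentence_of_mem hmem
  · exact models_indKAx_of_ind hind_of_IOpen n θ hqf

lemma model_IOpen_of_K (n : ℕ) [(IOpenK n).Model M] : IOpen.Model M := by
  haveI hPA : PAminus.Model M := Theory.Model.mono (inferInstance : (IOpenK n).Model M)
    (by unfold IOpenK; exact Set.subset_union_left)
  rw [Theory.model_iff]
  rintro φ (hmem | ⟨m, θ, hqf, rfl⟩)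
  · exact PAminus.realize_sentence_of_mem hmem
  · exact models_indAx_of_K n
      (fun m' θ' hqf' => (IOpenK n).realize_sentence_of_mem (M := M)
        (Set.mem_union_right _ ⟨m', θ', hqf', rfl⟩)) θ hqf

end Assembly

lemma models_iff_of_model_equiv {T T' : Lor.Theory} (σ : Lor.Sentence)
    (h1 : ∀ (N : Type) [Nonempty N] [Lor.Structure N] [T.Model N], T'.Model N)
    (h2 : ∀ (N : Type) [Nonempty N] [Lor.Structure N] [T'.Model N], T.Model N) :
    (T ⊨ᵇ σ) ↔ (T' ⊨ᵇ σ) := by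
  rw [Theory.models_sentence_iff, Theory.models_sentence_iff]
  constructor
  · intro h N
    haveI : T.Model N.Carrier := h2 N.Carrier
    exact h (Theory.ModelType.of T N.Carrier)
  · intro h N
    haveI : T'.Model N.Carrier := h1 N.Carrier
    exact h (Theory.ModelType.of T' N.Carrier)

/-- For every `n ∈ ℕ`, the theories `IOpen`, `PA⁻ + {I^< θ : θ q.f.}`,
`PA⁻ + {I^{(n+1)-step} θ : θ q.f.}` and `PA⁻ + {I^{n+1} θ : θ q.f.}` are deductively
equivalent: they prove the same sentences. -/
theorem stmt5 (n : ℕ) (σ : Lor.Sentence) :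
    (IOpen ⊨ᵇ σ ↔ IOpenLt ⊨ᵇ σ) ∧ (IOpen ⊨ᵇ σ ↔ IOpenStep n ⊨ᵇ σ) ∧
      (IOpen ⊨ᵇ σ ↔ IOpenK n ⊨ᵇ σ) := by
  refine ⟨?_, ?_, ?_⟩
  · exact models_iff_of_model_equiv σ (fun N _ _ _ => model_Lt_of_IOpen)
      (fun N _ _ _ => model_IOpen_of_Lt)
  · exact models_iff_of_model_equiv σ (fun N _ _ _ => model_Step_of_IOpen n)
      (fun N _ _ _ => model_IOpen_of_Step n)
  · exact models_iff_of_model_equiv σ (fun N _ _ _ => model_K_of_IOpen n)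
      (fun N _ _ _ => model_IOpen_of_K n)
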